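/- arXiv:1406.3702 — 4 statements merged into one kernel-verified Lean document; each statement's English description precedes it below -/
import Mathlib

section
/- Let N ≥ 2 and let q_1 < q_2 < ⋯ < q_N be real numbers. Then the N×N matrix E = (e^{−|q_i − q_j|})_{i,j=1}^N is invertible, and its inverse is the symmetric tridiagonal matrix with diagonal entries a_1 = (1/2)·e^{q_2−q_1}/sinh(q_2−q_1), a_n = (1/2)·sinh(q_{n+1}−q_{n−1})/(sinh(q_{n+1}−q_n)·sinh(q_n−q_{n−1})) for 2 ≤ n ≤ N−1, a_N = (1/2)·e^{q_N−q_{N−1}}/sinh(q_N−q_{N−1}), and off-diagonal entries b_n = −1/(2·sinh(q_{n+1}−q_n)) for n = 1,…,N−1 (in positions (n, n+1) and (n+1, n)), all other entries being zero. -/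
/-- The peakon interaction matrix `E i j = exp (-|q i - q j|)`. -/
noncomputable def peakonMatrix (N : ℕ) (q : ℕ → ℝ) : Matrix (Fin N) (Fin N) ℝ :=
  Matrix.of fun i j => Real.exp (-|q (i : ℕ) - q (j : ℕ)|)

/-- The symmetric tridiagonal matrix which inverts the peakon interaction matrix. -/
noncomputable def peakonInverse (N : ℕ) (q : ℕ → ℝ) : Matrix (Fin N) (Fin N) ℝ :=
  Matrix.of fun i j =>
    if (i : ℕ) = (j : ℕ) then
      (if (i : ℕ) = 0 then
        (1 / 2) * Real.exp (q 1 - q 0) / Real.sinh (q 1 - q 0)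
      else if (i : ℕ) = N - 1 then
        (1 / 2) * Real.exp (q (N - 1) - q (N - 2)) / Real.sinh (q (N - 1) - q (N - 2))
      else
        (1 / 2) * Real.sinh (q ((i : ℕ) + 1) - q ((i : ℕ) - 1)) /
          (Real.sinh (q ((i : ℕ) + 1) - q (i : ℕ)) *
            Real.sinh (q (i : ℕ) - q ((i : ℕ) - 1))))
    else if (j : ℕ) = (i : ℕ) + 1 then
      -(1 / (2 * Real.sinh (q (j : ℕ) - q (i : ℕ))))
    else if (i : ℕ) = (j : ℕ) + 1 then
      -(1 / (2 * Real.sinh (q (i : ℕ) - q (j : ℕ))))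
    else 0

open Real in
private lemma pk_aux_left_off (x r s : ℝ) (h : r < s) :
    exp (-(x - r)) * ((1/2) * exp (s - r) / sinh (s - r)) +
    exp (-(x - s)) * (-(1 / (2 * sinh (s - r)))) = 0 := by
  have hs : sinh (s - r) ≠ 0 := ne_of_gt (Real.sinh_pos_iff.mpr (by linarith))
  field_simp
  simp only [Real.sinh_eq, neg_sub, Real.exp_sub]
  try field_simp
  try ring

open Real in
private lemma pk_aux_left_diag (r s : ℝ) (h : r < s) :
    exp (-(r - r)) * ((1/2) * exp (s - r) / sinh (s - r)) +
    exp (-(s - r)) * (-(1 / (2 * sinh (s - r)))) = 1 := by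
  have hs : sinh (s - r) ≠ 0 := ne_of_gt (Real.sinh_pos_iff.mpr (by linarith))
  field_simp
  simp only [Real.sinh_eq, neg_sub, Real.exp_sub]
  try field_simp
  simp only [sub_self, mul_zero, neg_zero, Real.exp_zero]
  try ring

open Real in
private lemma pk_aux_right_off (x r s : ℝ) (h : r < s) :
    exp (-(r - x)) * (-(1 / (2 * sinh (s - r)))) +
    exp (-(s - x)) * ((1/2) * exp (s - r) / sinh (s - r)) = 0 := by
  have hs : sinh (s - r) ≠ 0 := ne_of_gt (Real.sinh_pos_iff.mpr (by linarith))
  field_simp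
  simp only [Real.sinh_eq, neg_sub, Real.exp_sub]
  try field_simp
  try ring

open Real in
private lemma pk_aux_right_diag (r s : ℝ) (h : r < s) :
    exp (-(s - r)) * (-(1 / (2 * sinh (s - r)))) +
    exp (-(s - s)) * ((1/2) * exp (s - r) / sinh (s - r)) = 1 := by
  have hs : sinh (s - r) ≠ 0 := ne_of_gt (Real.sinh_pos_iff.mpr (by linarith))
  field_simp
  simp only [Real.sinh_eq, neg_sub, Real.exp_sub]
  try field_simp
  simp only [sub_self, mul_zero, neg_zero, Real.exp_zero]
  try ring

open Real in
private lemma pk_aux_mid_left (x r s t : ℝ) (hrs : r < s) (hst : s < t) :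
    exp (-(r - x)) * (-(1 / (2 * sinh (s - r)))) +
    exp (-(s - x)) * ((1/2) * sinh (t - r) / (sinh (t - s) * sinh (s - r))) +
    exp (-(t - x)) * (-(1 / (2 * sinh (t - s)))) = 0 := by
  have h1 : sinh (s - r) ≠ 0 := ne_of_gt (Real.sinh_pos_iff.mpr (by linarith))
  have h2 : sinh (t - s) ≠ 0 := ne_of_gt (Real.sinh_pos_iff.mpr (by linarith))
  field_simp
  simp only [Real.sinh_eq, neg_sub, Real.exp_sub]
  try field_simp
  try ring

open Real in
private lemma pk_aux_mid_right (x r s t : ℝ) (hrs : r < s) (hst : s < t) :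
    exp (-(x - r)) * (-(1 / (2 * sinh (s - r)))) +
    exp (-(x - s)) * ((1/2) * sinh (t - r) / (sinh (t - s) * sinh (s - r))) +
    exp (-(x - t)) * (-(1 / (2 * sinh (t - s)))) = 0 := by
  have h1 : sinh (s - r) ≠ 0 := ne_of_gt (Real.sinh_pos_iff.mpr (by linarith))
  have h2 : sinh (t - s) ≠ 0 := ne_of_gt (Real.sinh_pos_iff.mpr (by linarith))
  field_simp
  simp only [Real.sinh_eq, neg_sub, Real.exp_sub]
  try field_simp
  try ring

open Real in
private lemma pk_aux_mid_diag (r s t : ℝ) (hrs : r < s) (hst : s < t) :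
    exp (-(s - r)) * (-(1 / (2 * sinh (s - r)))) +
    exp (-(s - s)) * ((1/2) * sinh (t - r) / (sinh (t - s) * sinh (s - r))) +
    exp (-(t - s)) * (-(1 / (2 * sinh (t - s)))) = 1 := by
  have h1 : sinh (s - r) ≠ 0 := ne_of_gt (Real.sinh_pos_iff.mpr (by linarith))
  have h2 : sinh (t - s) ≠ 0 := ne_of_gt (Real.sinh_pos_iff.mpr (by linarith))
  field_simp
  simp only [Real.sinh_eq, neg_sub, Real.exp_sub]
  try field_simp
  simp only [sub_self, mul_zero, neg_zero, Real.exp_zero]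
  try ring

/-- for `N ≥ 2` and strictly increasing `q_0 < q_1 < ⋯ < q_{N-1}`, the matrix
`E = (e^{-|q i - q j|})` is invertible with inverse the symmetric tridiagonal matrix above. -/
theorem stmt_0 (N : ℕ) (hN : 2 ≤ N) (q : ℕ → ℝ)
    (hq : ∀ i j, i < j → j < N → q i < q j) :
    peakonMatrix N q * peakonInverse N q = 1 ∧
    peakonInverse N q * peakonMatrix N q = 1 := by
  have hle : ∀ a b : ℕ, a ≤ b → b < N → q a ≤ q b := by
    intro a b hab hbN
    rcases eq_or_lt_of_le hab with h | h
    · rw [h]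
    · exact le_of_lt (hq a b h hbN)
  have habs_le : ∀ a b : ℕ, a ≤ b → b < N →
      Real.exp (-|q a - q b|) = Real.exp (-(q b - q a)) := by
    intro a b hab hbN
    rw [abs_sub_comm, abs_of_nonneg (by linarith [hle a b hab hbN])]
  have habs_ge : ∀ a b : ℕ, b ≤ a → a < N →
      Real.exp (-|q a - q b|) = Real.exp (-(q a - q b)) := by
    intro a b hba haN
    rw [abs_of_nonneg (by linarith [hle b a hba haN])]
  have hmain : peakonMatrix N q * peakonInverse N q = 1 := by
    ext i j
    have hiN := i.isLt
    have hjN := j.isLt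
    rw [Matrix.mul_apply, Matrix.one_apply]
    by_cases hj0 : (j : ℕ) = 0
    · -- column 0
      obtain ⟨k0, hv0⟩ : ∃ k : Fin N, (k : ℕ) = 0 := ⟨⟨0, by omega⟩, rfl⟩
      obtain ⟨k1, hv1⟩ : ∃ k : Fin N, (k : ℕ) = 1 := ⟨⟨1, by omega⟩, rfl⟩
      have hT0 : peakonInverse N q k0 j
          = (1/2) * Real.exp (q 1 - q 0) / Real.sinh (q 1 - q 0) := by
        simp only [peakonInverse, Matrix.of_apply]
        rw [if_pos (by omega), if_pos (by omega)]
      have hT1 : peakonInverse N q k1 j = -(1 / (2 * Real.sinh (q 1 - q 0))) := by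
        simp only [peakonInverse, Matrix.of_apply]
        rw [if_neg (by omega), if_neg (by omega), if_pos (by omega), hv1, hj0]
      have hsum : ∑ k, peakonMatrix N q i k * peakonInverse N q k j
          = peakonMatrix N q i k0 * peakonInverse N q k0 j
          + peakonMatrix N q i k1 * peakonInverse N q k1 j := by
        rw [← Finset.sum_subset (Finset.subset_univ ({k0, k1} : Finset (Fin N)))]
        · rw [Finset.sum_pair (by simp only [ne_eq, Fin.ext_iff]; omega)]
        · intro k _ hk
          have hkN := k.isLt
          simp only [Finset.mem_insert, Finset.mem_singleton, Fin.ext_iff] at hk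
          push_neg at hk
          have hz : peakonInverse N q k j = 0 := by
            simp only [peakonInverse, Matrix.of_apply]
            rw [if_neg (by omega), if_neg (by omega), if_neg (by omega)]
          rw [hz, mul_zero]
      rw [hsum, hT0, hT1]
      by_cases hi0 : (i : ℕ) = 0
      · rw [if_pos (Fin.ext (by omega))]
        have e0 : peakonMatrix N q i k0 = Real.exp (-(q 0 - q 0)) := by
          simp only [peakonMatrix, Matrix.of_apply, hv0, hi0]
          exact habs_le 0 0 le_rfl (by omega)
        have e1 : peakonMatrix N q i k1 = Real.exp (-(q 1 - q 0)) := by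
          simp only [peakonMatrix, Matrix.of_apply, hv1, hi0]
          exact habs_le 0 1 (by omega) (by omega)
        rw [e0, e1]
        exact pk_aux_left_diag (q 0) (q 1) (hq 0 1 (by omega) (by omega))
      · rw [if_neg (by simp only [ne_eq, Fin.ext_iff]; omega)]
        have e0 : peakonMatrix N q i k0 = Real.exp (-(q (i : ℕ) - q 0)) := by
          simp only [peakonMatrix, Matrix.of_apply, hv0]
          exact habs_ge (i : ℕ) 0 (by omega) (by omega)
        have e1 : peakonMatrix N q i k1 = Real.exp (-(q (i : ℕ) - q 1)) := by
          simp only [peakonMatrix, Matrix.of_apply, hv1]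
          exact habs_ge (i : ℕ) 1 (by omega) (by omega)
        rw [e0, e1]
        exact pk_aux_left_off (q (i : ℕ)) (q 0) (q 1) (hq 0 1 (by omega) (by omega))
    · by_cases hjL : (j : ℕ) = N - 1
      · -- last column
        obtain ⟨kA, hvA⟩ : ∃ k : Fin N, (k : ℕ) = N - 2 := ⟨⟨N - 2, by omega⟩, rfl⟩
        obtain ⟨kB, hvB⟩ : ∃ k : Fin N, (k : ℕ) = N - 1 := ⟨⟨N - 1, by omega⟩, rfl⟩
        have hTA : peakonInverse N q kA j
            = -(1 / (2 * Real.sinh (q (N - 1) - q (N - 2)))) := by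
          simp only [peakonInverse, Matrix.of_apply]
          rw [if_neg (by omega), if_pos (by omega), hjL, hvA]
        have hTB : peakonInverse N q kB j
            = (1/2) * Real.exp (q (N - 1) - q (N - 2)) / Real.sinh (q (N - 1) - q (N - 2)) := by
          simp only [peakonInverse, Matrix.of_apply]
          rw [if_pos (by omega), if_neg (by omega), if_pos (by omega)]
        have hsum : ∑ k, peakonMatrix N q i k * peakonInverse N q k j
            = peakonMatrix N q i kA * peakonInverse N q kA j
            + peakonMatrix N q i kB * peakonInverse N q kB j := by
          rw [← Finset.sum_subset (Finset.subset_univ ({kA, kB} : Finset (Fin N)))]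
          · rw [Finset.sum_pair (by simp only [ne_eq, Fin.ext_iff]; omega)]
          · intro k _ hk
            have hkN := k.isLt
            simp only [Finset.mem_insert, Finset.mem_singleton, Fin.ext_iff] at hk
            push_neg at hk
            have hz : peakonInverse N q k j = 0 := by
              simp only [peakonInverse, Matrix.of_apply]
              rw [if_neg (by omega), if_neg (by omega), if_neg (by omega)]
            rw [hz, mul_zero]
        rw [hsum, hTA, hTB]
        by_cases hiL : (i : ℕ) = N - 1
        · rw [if_pos (Fin.ext (by omega))]
          have eA : peakonMatrix N q i kA = Real.exp (-(q (N - 1) - q (N - 2))) := by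
            simp only [peakonMatrix, Matrix.of_apply, hvA, hiL]
            exact habs_ge (N - 1) (N - 2) (by omega) (by omega)
          have eB : peakonMatrix N q i kB = Real.exp (-(q (N - 1) - q (N - 1))) := by
            simp only [peakonMatrix, Matrix.of_apply, hvB, hiL]
            exact habs_ge (N - 1) (N - 1) le_rfl (by omega)
          rw [eA, eB]
          exact pk_aux_right_diag (q (N - 2)) (q (N - 1)) (hq (N - 2) (N - 1) (by omega) (by omega))
        · rw [if_neg (by simp only [ne_eq, Fin.ext_iff]; omega)]
          have eA : peakonMatrix N q i kA = Real.exp (-(q (N - 2) - q (i : ℕ))) := by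
            simp only [peakonMatrix, Matrix.of_apply, hvA]
            exact habs_le (i : ℕ) (N - 2) (by omega) (by omega)
          have eB : peakonMatrix N q i kB = Real.exp (-(q (N - 1) - q (i : ℕ))) := by
            simp only [peakonMatrix, Matrix.of_apply, hvB]
            exact habs_le (i : ℕ) (N - 1) (by omega) (by omega)
          rw [eA, eB]
          exact pk_aux_right_off (q (i : ℕ)) (q (N - 2)) (q (N - 1))
            (hq (N - 2) (N - 1) (by omega) (by omega))
      · -- middle column
        obtain ⟨km, hvm⟩ : ∃ k : Fin N, (k : ℕ) = (j : ℕ) - 1 := ⟨⟨(j : ℕ) - 1, by omega⟩, rfl⟩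
        obtain ⟨kp, hvp⟩ : ∃ k : Fin N, (k : ℕ) = (j : ℕ) + 1 := ⟨⟨(j : ℕ) + 1, by omega⟩, rfl⟩
        have hTm : peakonInverse N q km j
            = -(1 / (2 * Real.sinh (q (j : ℕ) - q ((j : ℕ) - 1)))) := by
          simp only [peakonInverse, Matrix.of_apply]
          rw [if_neg (by omega), if_pos (by omega), hvm]
        have hTj : peakonInverse N q j j
            = (1/2) * Real.sinh (q ((j : ℕ) + 1) - q ((j : ℕ) - 1)) /
              (Real.sinh (q ((j : ℕ) + 1) - q (j : ℕ)) *
                Real.sinh (q (j : ℕ) - q ((j : ℕ) - 1))) := by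
          simp only [peakonInverse, Matrix.of_apply]
          rw [if_pos trivial, if_neg (by omega), if_neg (by omega)]
        have hTp : peakonInverse N q kp j
            = -(1 / (2 * Real.sinh (q ((j : ℕ) + 1) - q (j : ℕ)))) := by
          simp only [peakonInverse, Matrix.of_apply]
          rw [if_neg (by omega), if_neg (by omega), if_pos (by omega), hvp]
        have hsum : ∑ k, peakonMatrix N q i k * peakonInverse N q k j
            = peakonMatrix N q i km * peakonInverse N q km j
            + (peakonMatrix N q i j * peakonInverse N q j j
            + peakonMatrix N q i kp * peakonInverse N q kp j) := by
          rw [← Finset.sum_subset (Finset.subset_univ ({km, j, kp} : Finset (Fin N)))]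
          · rw [Finset.sum_insert (by
                simp only [Finset.mem_insert, Finset.mem_singleton, Fin.ext_iff]
                omega),
              Finset.sum_pair (by simp only [ne_eq, Fin.ext_iff]; omega)]
          · intro k _ hk
            have hkN := k.isLt
            simp only [Finset.mem_insert, Finset.mem_singleton, Fin.ext_iff] at hk
            push_neg at hk
            have hz : peakonInverse N q k j = 0 := by
              simp only [peakonInverse, Matrix.of_apply]
              rw [if_neg (by omega), if_neg (by omega), if_neg (by omega)]
            rw [hz, mul_zero]
        rw [hsum, hTm, hTj, hTp]
        have hq1 : q ((j : ℕ) - 1) < q (j : ℕ) := hq _ _ (by omega) (by omega)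
        have hq2 : q (j : ℕ) < q ((j : ℕ) + 1) := hq _ _ (by omega) (by omega)
        rcases lt_trichotomy (i : ℕ) (j : ℕ) with hi | hi | hi
        · rw [if_neg (by simp only [ne_eq, Fin.ext_iff]; omega)]
          have em : peakonMatrix N q i km = Real.exp (-(q ((j : ℕ) - 1) - q (i : ℕ))) := by
            simp only [peakonMatrix, Matrix.of_apply, hvm]
            exact habs_le (i : ℕ) ((j : ℕ) - 1) (by omega) (by omega)
          have ej : peakonMatrix N q i j = Real.exp (-(q (j : ℕ) - q (i : ℕ))) := by
            simp only [peakonMatrix, Matrix.of_apply]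
            exact habs_le (i : ℕ) (j : ℕ) (by omega) (by omega)
          have ep : peakonMatrix N q i kp = Real.exp (-(q ((j : ℕ) + 1) - q (i : ℕ))) := by
            simp only [peakonMatrix, Matrix.of_apply, hvp]
            exact habs_le (i : ℕ) ((j : ℕ) + 1) (by omega) (by omega)
          rw [em, ej, ep]
          have := pk_aux_mid_left (q (i : ℕ)) (q ((j : ℕ) - 1)) (q (j : ℕ)) (q ((j : ℕ) + 1))
            hq1 hq2
          linarith [this]
        · rw [if_pos (Fin.ext hi)]
          have em : peakonMatrix N q i km = Real.exp (-(q (j : ℕ) - q ((j : ℕ) - 1))) := by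
            simp only [peakonMatrix, Matrix.of_apply, hvm, hi]
            exact habs_ge (j : ℕ) ((j : ℕ) - 1) (by omega) (by omega)
          have ej : peakonMatrix N q i j = Real.exp (-(q (j : ℕ) - q (j : ℕ))) := by
            simp only [peakonMatrix, Matrix.of_apply, hi]
            exact habs_ge (j : ℕ) (j : ℕ) le_rfl (by omega)
          have ep : peakonMatrix N q i kp = Real.exp (-(q ((j : ℕ) + 1) - q (j : ℕ))) := by
            simp only [peakonMatrix, Matrix.of_apply, hvp, hi]
            exact habs_le (j : ℕ) ((j : ℕ) + 1) (by omega) (by omega)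
          rw [em, ej, ep]
          have := pk_aux_mid_diag (q ((j : ℕ) - 1)) (q (j : ℕ)) (q ((j : ℕ) + 1)) hq1 hq2
          linarith [this]
        · rw [if_neg (by simp only [ne_eq, Fin.ext_iff]; omega)]
          have em : peakonMatrix N q i km = Real.exp (-(q (i : ℕ) - q ((j : ℕ) - 1))) := by
            simp only [peakonMatrix, Matrix.of_apply, hvm]
            exact habs_ge (i : ℕ) ((j : ℕ) - 1) (by omega) (by omega)
          have ej : peakonMatrix N q i j = Real.exp (-(q (i : ℕ) - q (j : ℕ))) := by
            simp only [peakonMatrix, Matrix.of_apply]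
            exact habs_ge (i : ℕ) (j : ℕ) (by omega) (by omega)
          have ep : peakonMatrix N q i kp = Real.exp (-(q (i : ℕ) - q ((j : ℕ) + 1))) := by
            simp only [peakonMatrix, Matrix.of_apply, hvp]
            exact habs_ge (i : ℕ) ((j : ℕ) + 1) (by omega) (by omega)
          rw [em, ej, ep]
          have := pk_aux_mid_right (q (i : ℕ)) (q ((j : ℕ) - 1)) (q (j : ℕ)) (q ((j : ℕ) + 1))
            hq1 hq2
          linarith [this]
  refine ⟨hmain, ?_⟩
  have hE : Matrix.transpose (peakonMatrix N q) = peakonMatrix N q := by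
    ext i j
    simp only [Matrix.transpose_apply, peakonMatrix, Matrix.of_apply, abs_sub_comm]
  have hT : Matrix.transpose (peakonInverse N q) = peakonInverse N q := by
    ext i j
    show peakonInverse N q j i = peakonInverse N q i j
    by_cases h : (i : ℕ) = (j : ℕ)
    · have hij : i = j := Fin.ext h
      rw [hij]
    · simp only [peakonInverse, Matrix.of_apply]
      split_ifs <;> first | rfl | omega
  calc peakonInverse N q * peakonMatrix N q
      = Matrix.transpose (peakonInverse N q) * Matrix.transpose (peakonMatrix N q) := by
        rw [hE, hT]
    _ = Matrix.transpose (peakonMatrix N q * peakonInverse N q) :=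
        (Matrix.transpose_mul _ _).symm
    _ = Matrix.transpose (1 : Matrix (Fin N) (Fin N) ℝ) := by rw [hmain]
    _ = 1 := Matrix.transpose_one
end

section
/- Let z ∈ ℂ. If there exists a bounded solution at z of the generalized spectral problem that is not identically zero, then z is real. -/
open scoped BigOperators

/-- Transfer matrix across an interval of length `d` for `-f'' + (1/4) f = 0`. -/
noncomputable def Tmat (d : ℝ) : Matrix (Fin 2) (Fin 2) ℂ :=
  !![Complex.cosh ((d : ℂ) / 2), 2 * Complex.sinh ((d : ℂ) / 2);
     (1 / 2) * Complex.sinh ((d : ℂ) / 2), Complex.cosh ((d : ℂ) / 2)]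

/-- Interface matrix at a point carrying weight `w` and dipole `v`. -/
noncomputable def Omat (w v : ℝ) (z : ℂ) : Matrix (Fin 2) (Fin 2) ℂ :=
  !![1, 0; -(z * (w : ℂ) + z ^ 2 * (v : ℂ)), 1]

/-- The value `(φ₋(z, x_N+), φ₋'(z, x_N+))` obtained by propagating the initial data
`(e^{x_0/2}, (1/2) e^{x_0/2})` through all the point interactions (0-indexed data). -/
noncomputable def transVec (N : ℕ) (x w v : ℕ → ℝ) (z : ℂ) : Fin 2 → ℂ :=
  Matrix.mulVec
    ((((List.range (N - 1)).reverse.map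
        (fun j => Omat (w (j + 1)) (v (j + 1)) z * Tmat (x (j + 1) - x j))).prod)
      * Omat (w 0) (v 0) z)
    ![Complex.exp ((x 0 : ℂ) / 2), (1 / 2) * Complex.exp ((x 0 : ℂ) / 2)]

/-- The Wronskian polynomial `W(z)` of the generalized spectral problem
`-f'' + (1/4) f = z ω f + z² υ f` (`W ≡ 1` when `N = 0`). -/
noncomputable def Wron (N : ℕ) (x w v : ℕ → ℝ) (z : ℂ) : ℂ :=
  if N = 0 then 1
  else Complex.exp (-(x (N - 1) : ℂ) / 2) *
    (transVec N x w v z 1 + (1 / 2) * transVec N x w v z 0)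

/-- The Weyl--Titchmarsh function `M(z)`. -/
noncomputable def WeylM (N : ℕ) (x w v : ℕ → ℝ) (z : ℂ) : ℂ :=
  Complex.exp ((x (N - 1) : ℂ) / 2) *
    ((1 / 2) * transVec N x w v z 0 - transVec N x w v z 1) / Wron N x w v z

/-- `f` (with distributional derivative represented by `f'`) is a solution at `z` of the
generalized spectral problem `-f'' + (1/4) f = z ω f + z² υ f` with
`ω = Σ_{n<N} w n δ_{x n}`, `υ = Σ_{n<N} v n δ_{x n}`: it is continuous, twice differentiable
away from the points `x n` with `f'' = (1/4) f` there, and the one-sided limits of `f'` at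
each `x n` exist and satisfy the jump condition
`f'(x_n+) - f'(x_n-) = -(z w_n + z² v_n) f (x_n)`. -/
def IsSol (N : ℕ) (x w v : ℕ → ℝ) (z : ℂ) (f f' : ℝ → ℂ) : Prop :=
  Continuous f ∧
  (∀ t : ℝ, (∀ n < N, t ≠ x n) →
    HasDerivAt f (f' t) t ∧ HasDerivAt f' ((1 / 4) * f t) t) ∧
  (∀ n < N, ∃ L R : ℂ,
    Filter.Tendsto f' (nhdsWithin (x n) (Set.Iio (x n))) (nhds L) ∧
    Filter.Tendsto f' (nhdsWithin (x n) (Set.Ioi (x n))) (nhds R) ∧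
    R - L = -(z * (w n : ℂ) + z ^ 2 * (v n : ℂ)) * f (x n))


open Filter Topology Set

noncomputable def ee (t : ℝ) : ℂ := Complex.exp ((t : ℂ) / 2)

lemma ee_mul_neg (t : ℝ) : ee t * ee (-t) = 1 := by
  rw [ee, ee, ← Complex.exp_add,
    show ((t : ℂ) / 2 + ((-t : ℝ) : ℂ) / 2) = 0 by push_cast; ring, Complex.exp_zero]

lemma conj_ee (t : ℝ) : (starRingEnd ℂ) (ee t) = ee t := by
  rw [ee, ← Complex.exp_conj, map_div₀, Complex.conj_ofReal, map_ofNat]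

lemma ee_sq (t : ℝ) : ee t * ee t = Complex.exp ((t : ℝ) : ℂ) := by
  rw [ee, ← Complex.exp_add]
  congr 1
  ring

lemma norm_ee (t : ℝ) : ‖ee t‖ = Real.exp (t / 2) := by
  rw [ee, show ((t : ℂ) / 2) = ((t / 2 : ℝ) : ℂ) by push_cast; ring,
    Complex.norm_exp, Complex.ofReal_re]

lemma continuous_ee : Continuous ee :=
  Complex.continuous_exp.comp (Complex.continuous_ofReal.div_const 2)

lemma const_on_Icc {P : ℝ → ℂ} {a b : ℝ}
    (h : ∀ u ∈ Set.Icc a b, HasDerivAt P 0 u) :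
    ∀ t ∈ Set.Icc a b, P t = P a :=
  constant_of_has_deriv_right_zero
    (fun u hu => (h u hu).continuousAt.continuousWithinAt)
    (fun u hu => (h u (Set.Ico_subset_Icc_self hu)).hasDerivWithinAt)

lemma ode_exp {h : ℝ → ℂ} {c : ℂ} {a b : ℝ}
    (hd : ∀ u ∈ Set.uIcc a b, HasDerivAt h (c * h u) u) :
    h b = h a * Complex.exp (c * ((b : ℂ) - (a : ℂ))) := by
  have key : ∀ u ∈ Set.Icc (a ⊓ b) (a ⊔ b),
      HasDerivAt (fun t : ℝ => h t * Complex.exp (-(c * t))) 0 u := by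
    intro u hu
    have h1 : HasDerivAt (fun t : ℝ => Complex.exp (-(c * t)))
        (Complex.exp (-(c * u)) * (-(c * 1))) u :=
      (((hasDerivAt_id ((u : ℝ) : ℂ)).const_mul c).neg).cexp.comp_ofReal
    have h2 := (hd u hu).mul h1
    exact h2.congr_deriv (by ring)
  have hmem_a : a ∈ Set.Icc (a ⊓ b) (a ⊔ b) := ⟨inf_le_left, le_sup_left⟩
  have hmem_b : b ∈ Set.Icc (a ⊓ b) (a ⊔ b) := ⟨inf_le_right, le_sup_right⟩
  have e1 := const_on_Icc (a := a ⊓ b) (b := a ⊔ b)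
    (fun u hu => key u hu) b hmem_b
  have e2 := const_on_Icc (a := a ⊓ b) (b := a ⊔ b)
    (fun u hu => key u hu) a hmem_a
  have e3 : h b * Complex.exp (-(c * b)) = h a * Complex.exp (-(c * a)) := by
    rw [e1, ← e2]
  have h4 := congrArg (fun y => y * Complex.exp (c * (b : ℂ))) e3
  calc h b = h b * (Complex.exp (-(c * b)) * Complex.exp (c * (b : ℂ))) := by
        rw [← Complex.exp_add, show (-(c * (b:ℂ)) + c * (b:ℂ)) = 0 by ring,
          Complex.exp_zero, mul_one]
    _ = h a * Complex.exp (-(c * a)) * Complex.exp (c * (b : ℂ)) := by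
        rw [← mul_assoc]; exact h4
    _ = h a * Complex.exp (c * ((b : ℂ) - (a : ℂ))) := by
        rw [mul_assoc, ← Complex.exp_add]
        congr 2
        ring

lemma exp_split (t t₀ : ℝ) :
    Complex.exp ((1 / 2 : ℂ) * ((t : ℂ) - (t₀ : ℂ))) = ee (-t₀) * ee t := by
  rw [ee, ee, ← Complex.exp_add]
  congr 1
  push_cast
  ring

lemma exp_split_neg (t t₀ : ℝ) :
    Complex.exp ((-(1 / 2) : ℂ) * ((t : ℂ) - (t₀ : ℂ))) = ee t₀ * ee (-t) := by
  rw [ee, ee, ← Complex.exp_add]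
  congr 1
  push_cast
  ring

lemma structure_on {f f' : ℝ → ℂ} {s : Set ℝ} (hs : s.OrdConnected)
    (hf : ∀ t ∈ s, HasDerivAt f (f' t) t ∧ HasDerivAt f' ((1 / 4 : ℂ) * f t) t)
    {t₀ : ℝ} (ht₀ : t₀ ∈ s) :
    ∃ A B : ℂ, ∀ t ∈ s, f t = A * ee t + B * ee (-t) ∧
      f' t = A / 2 * ee t - B / 2 * ee (-t) := by
  refine ⟨(f' t₀ + f t₀ / 2) * ee (-t₀), -((f' t₀ - f t₀ / 2) * ee t₀), fun t ht => ?_⟩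
  have hsub := hs.uIcc_subset ht₀ ht
  have hqq : f' t + f t / 2
      = (f' t₀ + f t₀ / 2) * Complex.exp ((1 / 2 : ℂ) * ((t : ℂ) - (t₀ : ℂ))) := by
    refine ode_exp (h := fun u => f' u + f u / 2) (c := (1 / 2 : ℂ)) ?_
    intro u hu
    obtain ⟨h1, h2⟩ := hf u (hsub hu)
    have h3 := h2.add (h1.div_const 2)
    exact h3.congr_deriv (by ring)
  have hpp : f' t - f t / 2
      = (f' t₀ - f t₀ / 2) * Complex.exp ((-(1 / 2) : ℂ) * ((t : ℂ) - (t₀ : ℂ))) := by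
    refine ode_exp (h := fun u => f' u - f u / 2) (c := (-(1 / 2) : ℂ)) ?_
    intro u hu
    obtain ⟨h1, h2⟩ := hf u (hsub hu)
    have h3 := h2.sub (h1.div_const 2)
    exact h3.congr_deriv (by ring)
  rw [exp_split] at hqq
  rw [exp_split_neg] at hpp
  constructor
  · have h5 : f t = (f' t + f t / 2) - (f' t - f t / 2) := by ring
    rw [h5, hqq, hpp]; ring
  · have h5 : f' t = ((f' t + f t / 2) + (f' t - f t / 2)) / 2 := by ring
    rw [h5, hqq, hpp]; ring

lemma coeff_zero_of_bounded {g : ℝ → ℂ} {A B : ℂ} {x0 C : ℝ}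
    (h : ∀ t < x0, g t = A * ee t + B * ee (-t))
    (hbd : ∀ t, ‖g t‖ ≤ C) : B = 0 := by
  by_contra hB
  have hC : 0 ≤ C := le_trans (norm_nonneg _) (hbd 0)
  set r : ℝ := (C + ‖A‖ + 1) / ‖B‖ with hr
  have hBpos : 0 < ‖B‖ := norm_pos_iff.mpr hB
  have hrpos : 0 < r := div_pos (by positivity) hBpos
  set t : ℝ := min (x0 - 1) (min 0 (-2 * Real.log r)) with ht
  have ht1 : t < x0 := lt_of_le_of_lt (min_le_left _ _) (by linarith)
  have ht2 : t ≤ 0 := le_trans (min_le_right _ _) (min_le_left _ _)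
  have ht3 : Real.log r ≤ (-t) / 2 := by
    have h4 : t ≤ -2 * Real.log r := le_trans (min_le_right _ _) (min_le_right _ _)
    linarith
  have hexp1 : r ≤ Real.exp ((-t) / 2) := by
    calc r = Real.exp (Real.log r) := (Real.exp_log hrpos).symm
      _ ≤ _ := Real.exp_le_exp.mpr ht3
  have hexp2 : Real.exp (t / 2) ≤ 1 := by
    have h4 := Real.exp_le_exp.mpr (show t / 2 ≤ 0 by linarith)
    rwa [Real.exp_zero] at h4
  have hnormA : ‖A * ee t‖ = ‖A‖ * Real.exp (t / 2) := by rw [norm_mul, norm_ee]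
  have hnormB : ‖B * ee (-t)‖ = ‖B‖ * Real.exp ((-t) / 2) := by rw [norm_mul, norm_ee]
  have hnorm : ‖B‖ * Real.exp ((-t) / 2) - ‖A‖ * Real.exp (t / 2) ≤ ‖g t‖ := by
    rw [h t ht1]
    have h5 : ‖B * ee (-t)‖ ≤ ‖A * ee t + B * ee (-t)‖ + ‖A * ee t‖ := by
      calc ‖B * ee (-t)‖ = ‖(A * ee t + B * ee (-t)) - A * ee t‖ := by
            congr 1; ring
        _ ≤ _ := norm_sub_le _ _
    rw [hnormA, hnormB] at h5
    linarith
  have h7 : C + ‖A‖ + 1 ≤ Real.exp ((-t) / 2) * ‖B‖ := (div_le_iff₀ hBpos).mp hexp1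
  have h8 : ‖A‖ * Real.exp (t / 2) ≤ ‖A‖ := by
    nlinarith [norm_nonneg A, Real.exp_pos (t / 2)]
  have := hbd t
  linarith

lemma telescope {M : ℕ} (Aq Bq : ℕ → ℂ) :
    ∑ n ∈ Finset.range (M + 1), (Bq n - Aq n)
      = Bq M - Aq 0 - ∑ n ∈ Finset.range M, (Aq (n + 1) - Bq n) := by
  rw [Finset.sum_range_succ]
  have h2 : ∀ n ∈ Finset.range M, Bq n - Aq n
      = (Aq (n + 1) - Aq n) - (Aq (n + 1) - Bq n) := by intros; ring
  rw [Finset.sum_congr rfl h2, Finset.sum_sub_distrib, Finset.sum_range_sub]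
  ring

lemma gval (cA cB : ℂ) (s : ℝ) :
    (starRingEnd ℂ) (cA * ee s + cB * ee (-s)) * (cA / 2 * ee s - cB / 2 * ee (-s))
      = ((Complex.normSq cA / 2 * Real.exp s - Complex.normSq cB / 2 * Real.exp (-s) : ℝ) : ℂ)
        + ((starRingEnd ℂ) cB * cA - (starRingEnd ℂ) cA * cB) / 2 := by
  have e1 : ((Complex.normSq cA : ℝ) : ℂ) = (starRingEnd ℂ) cA * cA := by
    rw [mul_comm, Complex.mul_conj]
  have e2 : ((Complex.normSq cB : ℝ) : ℂ) = (starRingEnd ℂ) cB * cB := by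
    rw [mul_comm, Complex.mul_conj]
  have e3 := ee_sq s
  have e4 := ee_sq (-s)
  have e5 := ee_mul_neg s
  rw [map_add, map_mul, map_mul, conj_ee, conj_ee]
  push_cast at e3 e4 ⊢
  linear_combination ((starRingEnd ℂ) cA * cA / 2) * e3
    - ((starRingEnd ℂ) cB * cB / 2) * e4
    + (((starRingEnd ℂ) cB * cA - (starRingEnd ℂ) cA * cB) / 2) * e5
    - (Complex.exp ((s : ℝ) : ℂ) / 2) * e1 + (Complex.exp (-((s : ℝ) : ℂ)) / 2) * e2

/-- if the generalized spectral problem has a nontrivial bounded solution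
at `z`, then `z` is real. -/
theorem stmt_1 (N : ℕ) (hN : 1 ≤ N) (x w v : ℕ → ℝ)
    (hx : ∀ i j, i < j → j < N → x i < x j)
    (hv : ∀ n, n < N → 0 ≤ v n) (hnd : ∀ n, n < N → 0 < |w n| + v n)
    (z : ℂ) (f f' : ℝ → ℂ)
    (hsol : IsSol N x w v z f f')
    (hbd : ∃ C : ℝ, ∀ t : ℝ, ‖f t‖ ≤ C)
    (hne : ∃ t : ℝ, f t ≠ 0) :
    z.im = 0 := by
  obtain ⟨hc, hode, hjump⟩ := hsol
  obtain ⟨C, hC⟩ := hbd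
  have hmono : ∀ i j, i ≤ j → j < N → x i ≤ x j := by
    intro i j hij hj
    rcases lt_or_eq_of_le hij with h | h
    · exact le_of_lt (hx i j h hj)
    · exact le_of_eq (congrArg x h)
  have hNm : N - 1 < N := by omega
  have h0N : 0 < N := hN
  have hode' : ∀ s : Set ℝ, (∀ t ∈ s, ∀ n, n < N → t ≠ x n) →
      ∀ t ∈ s, HasDerivAt f (f' t) t ∧ HasDerivAt f' ((1 / 4 : ℂ) * f t) t := by
    intro s hs t ht
    exact hode t (fun n hn => hs t ht n hn)
  -- left tail
  have havL : ∀ t ∈ Set.Iio (x 0), ∀ n, n < N → t ≠ x n := by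
    intro t ht n hn
    exact ne_of_lt (lt_of_lt_of_le ht (hmono 0 n (Nat.zero_le n) hn))
  obtain ⟨AL, BL, hL⟩ := structure_on Set.ordConnected_Iio (hode' _ havL)
    (show x 0 - 1 ∈ Set.Iio (x 0) from Set.mem_Iio.mpr (sub_lt_self _ one_pos))
  have hBL : BL = 0 := coeff_zero_of_bounded (fun t ht => (hL t ht).1) hC
  subst hBL
  -- right tail
  have havR : ∀ t ∈ Set.Ioi (x (N - 1)), ∀ n, n < N → t ≠ x n := by
    intro t ht n hn
    exact ne_of_gt (lt_of_le_of_lt (hmono n (N - 1) (by omega) hNm) ht)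
  obtain ⟨AR, BR, hR⟩ := structure_on Set.ordConnected_Ioi (hode' _ havR)
    (show x (N - 1) + 1 ∈ Set.Ioi (x (N - 1)) from Set.mem_Ioi.mpr (lt_add_one _))
  have hAR : AR = 0 := by
    refine coeff_zero_of_bounded (g := fun t => f (-t)) (A := BR) (B := AR)
      (x0 := -(x (N - 1))) (C := C) ?_ (fun t => hC (-t))
    intro t ht
    have h1 : -t ∈ Set.Ioi (x (N - 1)) := by
      simp only [Set.mem_Ioi]
      linarith
    have h2 := (hR (-t) h1).1
    rw [neg_neg] at h2
    show f (-t) = BR * ee t + AR * ee (-t)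
    rw [h2]
    ring
  subst hAR
  -- middle intervals
  have hmid : ∀ n : ℕ, ∃ aa bb : ℂ, n + 1 < N →
      ∀ t ∈ Set.Ioo (x n) (x (n + 1)),
        f t = aa * ee t + bb * ee (-t) ∧ f' t = aa / 2 * ee t - bb / 2 * ee (-t) := by
    intro n
    by_cases hn : n + 1 < N
    · have hlt := hx n (n + 1) (Nat.lt_succ_self n) hn
      have hav : ∀ t ∈ Set.Ioo (x n) (x (n + 1)), ∀ m, m < N → t ≠ x m := by
        intro t ht m hm
        rcases le_or_gt m n with h | h
        · exact ne_of_gt (lt_of_le_of_lt (hmono m n h (by omega)) ht.1)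
        · exact ne_of_lt (lt_of_lt_of_le ht.2 (hmono (n + 1) m h hm))
      obtain ⟨aa, bb, hab⟩ := structure_on Set.ordConnected_Ioo (hode' _ hav)
        (show (x n + x (n + 1)) / 2 ∈ Set.Ioo (x n) (x (n + 1)) from
          ⟨by linarith, by linarith⟩)
      exact ⟨aa, bb, fun _ => hab⟩
    · exact ⟨0, 0, fun h => absurd h hn⟩
  choose a b hab using hmid
  -- jump data
  have hjump' : ∀ n : ℕ, ∃ Ln Rn : ℂ, n < N →
      Filter.Tendsto f' (nhdsWithin (x n) (Set.Iio (x n))) (nhds Ln) ∧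
      Filter.Tendsto f' (nhdsWithin (x n) (Set.Ioi (x n))) (nhds Rn) ∧
      Rn - Ln = -(z * (w n : ℂ) + z ^ 2 * (v n : ℂ)) * f (x n) := by
    intro n
    by_cases hn : n < N
    · obtain ⟨Ln, Rn, h1, h2, h3⟩ := hjump n hn
      exact ⟨Ln, Rn, fun _ => ⟨h1, h2, h3⟩⟩
    · exact ⟨0, 0, fun h => absurd h hn⟩
  choose L R hLR using hjump'
  -- limit identification tool
  have keylim : ∀ (g : ℝ → ℂ) (G : ℂ) (s : Set ℝ) (pt : ℝ) (cA cB : ℂ),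
      (nhdsWithin pt s).NeBot →
      (∀ t ∈ s, g t = cA * ee t + cB * ee (-t)) →
      Filter.Tendsto g (nhdsWithin pt s) (nhds G) →
      G = cA * ee pt + cB * ee (-pt) := by
    intro g G s pt cA cB hnb heq hg
    haveI := hnb
    have hcont : Filter.Tendsto (fun t => cA * ee t + cB * ee (-t))
        (nhdsWithin pt s) (nhds (cA * ee pt + cB * ee (-pt))) := by
      refine Filter.Tendsto.mono_left ?_ nhdsWithin_le_nhds
      exact Continuous.tendsto
        ((continuous_const.mul continuous_ee).add
          (continuous_const.mul (continuous_ee.comp continuous_neg))) pt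
    exact tendsto_nhds_unique hg
      (hcont.congr' (eventually_nhdsWithin_of_forall (fun t ht => (heq t ht).symm)))
  -- endpoint values
  have val0 : f (x 0) = AL * ee (x 0) + 0 * ee (-(x 0)) := by
    exact keylim f _ (Set.Iio (x 0)) (x 0) AL 0 (nhdsLT_neBot _)
      (fun t ht => (hL t ht).1)
      ((hc.tendsto (x 0)).mono_left nhdsWithin_le_nhds)
  have valL0 : L 0 = AL / 2 * ee (x 0) - 0 / 2 * ee (-(x 0)) := by
    have h1 : L 0 = AL / 2 * ee (x 0) + (-((0 : ℂ) / 2)) * ee (-(x 0)) := by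
      exact keylim f' _ (Set.Iio (x 0)) (x 0) (AL / 2) (-((0 : ℂ) / 2))
        (nhdsLT_neBot _)
        (fun t ht => by rw [(hL t ht).2]; ring) (hLR 0 h0N).1
    rw [h1]; ring
  have valN : f (x (N - 1)) = 0 * ee (x (N - 1)) + BR * ee (-(x (N - 1))) := by
    exact keylim f _ (Set.Ioi (x (N - 1))) (x (N - 1)) 0 BR
      (nhdsGT_neBot _) (fun t ht => (hR t ht).1)
      ((hc.tendsto _).mono_left nhdsWithin_le_nhds)
  have valRN : R (N - 1) = 0 / 2 * ee (x (N - 1)) - BR / 2 * ee (-(x (N - 1))) := by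
    have h1 : R (N - 1) = ((0 : ℂ) / 2) * ee (x (N - 1)) + (-(BR / 2)) * ee (-(x (N - 1))) := by
      exact keylim f' _ (Set.Ioi (x (N - 1))) (x (N - 1)) ((0 : ℂ) / 2) (-(BR / 2))
        (nhdsGT_neBot _)
        (fun t ht => by rw [(hR t ht).2]; ring) ((hLR (N - 1) hNm).2.1)
    rw [h1]; ring
  have hnbIoo : ∀ n, n + 1 < N → (nhdsWithin (x n) (Set.Ioo (x n) (x (n + 1)))).NeBot
      ∧ (nhdsWithin (x (n + 1)) (Set.Ioo (x n) (x (n + 1)))).NeBot := by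
    intro n hn
    have hlt := hx n (n + 1) (Nat.lt_succ_self n) hn
    have hcl : closure (Set.Ioo (x n) (x (n + 1))) = Set.Icc (x n) (x (n + 1)) :=
      closure_Ioo (ne_of_lt hlt)
    constructor
    · exact mem_closure_iff_nhdsWithin_neBot.mp
        (by rw [hcl]; exact ⟨le_refl _, le_of_lt hlt⟩)
    · exact mem_closure_iff_nhdsWithin_neBot.mp
        (by rw [hcl]; exact ⟨le_of_lt hlt, le_refl _⟩)
  have fvr : ∀ n, n + 1 < N → f (x n) = a n * ee (x n) + b n * ee (-(x n)) := by
    intro n hn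
    exact keylim f _ (Set.Ioo (x n) (x (n + 1))) (x n) (a n) (b n) (hnbIoo n hn).1
      (fun t ht => (hab n hn t ht).1)
      ((hc.tendsto _).mono_left nhdsWithin_le_nhds)
  have fvl : ∀ n, n + 1 < N →
      f (x (n + 1)) = a n * ee (x (n + 1)) + b n * ee (-(x (n + 1))) := by
    intro n hn
    exact keylim f _ (Set.Ioo (x n) (x (n + 1))) (x (n + 1)) (a n) (b n) (hnbIoo n hn).2
      (fun t ht => (hab n hn t ht).1)
      ((hc.tendsto _).mono_left nhdsWithin_le_nhds)
  have vR : ∀ n, n + 1 < N →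
      R n = a n / 2 * ee (x n) - b n / 2 * ee (-(x n)) := by
    intro n hn
    have h1 : R n = a n / 2 * ee (x n) + (-(b n / 2)) * ee (-(x n)) := by
      refine keylim f' _ (Set.Ioo (x n) (x (n + 1))) (x n) (a n / 2) (-(b n / 2))
        (hnbIoo n hn).1 (fun t ht => by rw [(hab n hn t ht).2]; ring) ?_
      exact ((hLR n (by omega)).2.1).mono_left
        (nhdsWithin_mono _ Set.Ioo_subset_Ioi_self)
    rw [h1]; ring
  have vL : ∀ n, n + 1 < N →
      L (n + 1) = a n / 2 * ee (x (n + 1)) - b n / 2 * ee (-(x (n + 1))) := by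
    intro n hn
    have h1 : L (n + 1) = a n / 2 * ee (x (n + 1)) + (-(b n / 2)) * ee (-(x (n + 1))) := by
      refine keylim f' _ (Set.Ioo (x n) (x (n + 1))) (x (n + 1)) (a n / 2) (-(b n / 2))
        (hnbIoo n hn).2 (fun t ht => by rw [(hab n hn t ht).2]; ring) ?_
      exact ((hLR (n + 1) hn).1).mono_left
        (nhdsWithin_mono _ Set.Ioo_subset_Iio_self)
    rw [h1]; ring
  -- interface quantities
  obtain ⟨Aq, hAq⟩ : ∃ Aq : ℕ → ℂ, ∀ n, Aq n = (starRingEnd ℂ) (f (x n)) * L n :=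
    ⟨_, fun _ => rfl⟩
  obtain ⟨Bq, hBq⟩ : ∃ Bq : ℕ → ℂ, ∀ n, Bq n = (starRingEnd ℂ) (f (x n)) * R n :=
    ⟨_, fun _ => rfl⟩
  obtain ⟨Dr, hDr⟩ : ∃ Dr : ℕ → ℝ, ∀ n, Dr n
      = Complex.normSq (a n) / 2 * (Real.exp (x (n + 1)) - Real.exp (x n))
        + Complex.normSq (b n) / 2 * (Real.exp (-(x n)) - Real.exp (-(x (n + 1)))) :=
    ⟨_, fun _ => rfl⟩
  have hA0 : Aq 0 = ((Complex.normSq AL / 2 * Real.exp (x 0) : ℝ) : ℂ) := by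
    rw [hAq 0, val0, valL0, gval]
    simp [Complex.normSq_zero]
  have hBN : Bq (N - 1) = -((Complex.normSq BR / 2 * Real.exp (-(x (N - 1))) : ℝ) : ℂ) := by
    rw [hBq (N - 1), valN, valRN, gval]
    push_cast
    simp [Complex.normSq_zero]
  have hDex : ∀ n, n + 1 < N → Aq (n + 1) - Bq n = ((Dr n : ℝ) : ℂ) := by
    intro n hn
    rw [hAq (n + 1), hBq n, fvl n hn, vL n hn, fvr n hn, vR n hn, gval, gval, hDr n]
    push_cast
    ring
  have hDrpos : ∀ n, n + 1 < N → 0 ≤ Dr n ∧ (Dr n = 0 → a n = 0 ∧ b n = 0) := by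
    intro n hn
    have hlt := hx n (n + 1) (Nat.lt_succ_self n) hn
    have h1 : Real.exp (x n) < Real.exp (x (n + 1)) := Real.exp_lt_exp.mpr hlt
    have h2 : Real.exp (-(x (n + 1))) < Real.exp (-(x n)) := Real.exp_lt_exp.mpr (by linarith)
    have hna := Complex.normSq_nonneg (a n)
    have hnb := Complex.normSq_nonneg (b n)
    rw [hDr n]
    refine ⟨by nlinarith, fun h0 => ⟨?_, ?_⟩⟩
    · exact Complex.normSq_eq_zero.mp (by nlinarith)
    · exact Complex.normSq_eq_zero.mp (by nlinarith)
  -- real sums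
  obtain ⟨S1, hS1⟩ : ∃ r : ℝ, r = ∑ n ∈ Finset.range N, w n * Complex.normSq (f (x n)) :=
    ⟨_, rfl⟩
  obtain ⟨S2, hS2⟩ : ∃ r : ℝ, r = ∑ n ∈ Finset.range N, v n * Complex.normSq (f (x n)) :=
    ⟨_, rfl⟩
  obtain ⟨RT, hRT⟩ : ∃ r : ℝ, r = Complex.normSq AL / 2 * Real.exp (x 0)
      + Complex.normSq BR / 2 * Real.exp (-(x (N - 1)))
      + ∑ n ∈ Finset.range (N - 1), Dr n := ⟨_, rfl⟩
  -- telescoping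
  have hMsucc : N = (N - 1) + 1 := by omega
  have htel : ∑ n ∈ Finset.range N, (Bq n - Aq n)
      = Bq (N - 1) - Aq 0 - ∑ n ∈ Finset.range (N - 1), (Aq (n + 1) - Bq n) := by
    conv_lhs => rw [hMsucc]
    exact telescope Aq Bq
  have hsumD : ∑ n ∈ Finset.range (N - 1), (Aq (n + 1) - Bq n)
      = ((∑ n ∈ Finset.range (N - 1), Dr n : ℝ) : ℂ) := by
    push_cast
    refine Finset.sum_congr rfl fun n hn => ?_
    have hn' : n + 1 < N := by
      have := Finset.mem_range.mp hn; omega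
    rw [hDex n hn']
  -- jump identity
  have hterm : ∀ n ∈ Finset.range N, Bq n - Aq n
      = -(z * (w n : ℂ) * (Complex.normSq (f (x n)) : ℂ)
          + z ^ 2 * (v n : ℂ) * (Complex.normSq (f (x n)) : ℂ)) := by
    intro n hn
    have hn' := Finset.mem_range.mp hn
    have h3 := (hLR n hn').2.2
    have h4 : Bq n - Aq n = (starRingEnd ℂ) (f (x n)) * (R n - L n) := by
      rw [hAq n, hBq n]; ring
    rw [h4, h3]
    have h5 : (starRingEnd ℂ) (f (x n)) * f (x n) = (Complex.normSq (f (x n)) : ℂ) := by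
      rw [mul_comm, Complex.mul_conj]
    linear_combination (-(z * (w n : ℂ) + z ^ 2 * (v n : ℂ))) * h5
  have hsum1 : ∑ n ∈ Finset.range N, (Bq n - Aq n)
      = -(z * (S1 : ℂ) + z ^ 2 * (S2 : ℂ)) := by
    rw [Finset.sum_congr rfl hterm, hS1, hS2]
    push_cast
    rw [Finset.mul_sum, Finset.mul_sum, ← Finset.sum_add_distrib, ← Finset.sum_neg_distrib]
    exact Finset.sum_congr rfl fun n _ => by ring
  -- main identity
  have hzid : z * (S1 : ℂ) + z ^ 2 * (S2 : ℂ) = (RT : ℂ) := by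
    have h6 := hsum1.symm.trans htel
    rw [hA0, hBN, hsumD] at h6
    rw [hRT]
    push_cast at h6 ⊢
    linear_combination -h6
  -- nonnegativity
  have hS2nn : 0 ≤ S2 := by
    rw [hS2]
    refine Finset.sum_nonneg fun n hn => ?_
    exact mul_nonneg (hv n (Finset.mem_range.mp hn)) (Complex.normSq_nonneg _)
  have hDnn : ∀ n ∈ Finset.range (N - 1), 0 ≤ Dr n := by
    intro n hn
    exact (hDrpos n (by have := Finset.mem_range.mp hn; omega)).1
  have hsA : 0 ≤ Complex.normSq AL / 2 * Real.exp (x 0) :=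
    mul_nonneg (div_nonneg (Complex.normSq_nonneg _) (by norm_num)) (Real.exp_pos _).le
  have hsB : 0 ≤ Complex.normSq BR / 2 * Real.exp (-(x (N - 1))) :=
    mul_nonneg (div_nonneg (Complex.normSq_nonneg _) (by norm_num)) (Real.exp_pos _).le
  have hsD : 0 ≤ ∑ n ∈ Finset.range (N - 1), Dr n := Finset.sum_nonneg hDnn
  have hRTnn : 0 ≤ RT := by rw [hRT]; linarith
  -- RT ≠ 0
  have hRTne : RT ≠ 0 := by
    intro h0
    rw [hRT] at h0
    have hAL0 : AL = 0 := by
      have h1 : Complex.normSq AL / 2 * Real.exp (x 0) = 0 := by linarith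
      rcases mul_eq_zero.mp h1 with h | h
      · exact Complex.normSq_eq_zero.mp (by linarith)
      · exact absurd h (ne_of_gt (Real.exp_pos _))
    have hBR0 : BR = 0 := by
      have h1 : Complex.normSq BR / 2 * Real.exp (-(x (N - 1))) = 0 := by linarith
      rcases mul_eq_zero.mp h1 with h | h
      · exact Complex.normSq_eq_zero.mp (by linarith)
      · exact absurd h (ne_of_gt (Real.exp_pos _))
    have hDr0 : ∀ n ∈ Finset.range (N - 1), Dr n = 0 := by
      have hsum0 : ∑ n ∈ Finset.range (N - 1), Dr n = 0 := by linarith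
      exact (Finset.sum_eq_zero_iff_of_nonneg hDnn).mp hsum0
    have hab0 : ∀ n, n + 1 < N → a n = 0 ∧ b n = 0 := by
      intro n hn
      exact (hDrpos n hn).2 (hDr0 n (Finset.mem_range.mpr (by omega)))
    have hf0 : ∀ t, f t = 0 := by
      have aux : ∀ n, n < N → ∀ t, t ≤ x n → f t = 0 := by
        intro n
        induction n with
        | zero =>
          intro _ t ht
          rcases lt_or_eq_of_le ht with h | h
          · rw [(hL t h).1, hAL0]; ring
          · rw [h, val0, hAL0]; ring
        | succ n ih =>
          intro hn t ht
          rcases le_or_gt t (x n) with h1 | h1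
          · exact ih (by omega) t h1
          · obtain ⟨ha0, hb0⟩ := hab0 n hn
            rcases lt_or_eq_of_le ht with h | h
            · rw [(hab n hn t ⟨h1, h⟩).1, ha0, hb0]; ring
            · rw [h, fvl n hn, ha0, hb0]; ring
      intro t
      rcases le_or_gt t (x (N - 1)) with h | h
      · exact aux (N - 1) hNm t h
      · rw [(hR t h).1, hBR0]; ring
    obtain ⟨t, htne⟩ := hne
    exact htne (hf0 t)
  have hRTpos : 0 < RT := lt_of_le_of_ne hRTnn (Ne.symm hRTne)
  -- extract real and imaginary parts
  have hre := congrArg Complex.re hzid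
  have him := congrArg Complex.im hzid
  simp only [Complex.add_re, Complex.add_im, Complex.mul_re, Complex.mul_im,
    Complex.ofReal_re, Complex.ofReal_im, pow_two] at hre him
  by_contra him0
  have h5 : z.im * (S1 + 2 * z.re * S2) = 0 := by linear_combination him
  have h6 : S1 + 2 * z.re * S2 = 0 := by
    rcases mul_eq_zero.mp h5 with h | h
    · exact absurd h him0
    · exact h
  have h7 : z.re * S1 + (z.re * z.re - z.im * z.im) * S2 = RT := by linear_combination hre
  have h8 : z.re * S1 + 2 * (z.re * z.re) * S2 = 0 := by linear_combination z.re * h6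
  nlinarith [mul_nonneg hS2nn (mul_self_nonneg z.re), mul_nonneg hS2nn (mul_self_nonneg z.im)]
end

section
/- Let λ ∈ ℝ and let f be a bounded solution at λ of the generalized spectral problem that is not identically zero. Then f and f′ are square-integrable on ℝ and λ · Σ_n ω_n |f(x_n)|² + λ² · Σ_n υ_n |f(x_n)|² = (1/4) ∫_ℝ |f(x)|² dx + ∫_ℝ |f′(x)|² dx > 0. -/
open scoped BigOperators

open MeasureTheory
section AuxLemmas

open Set MeasureTheory

private lemma expHalf_hasDerivAt (t : ℝ) :
    HasDerivAt (fun s : ℝ => ((Real.exp (s / 2) : ℝ) : ℂ)) ((1 / 2 : ℂ) * Real.exp (t / 2)) t := by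
  have h1 : HasDerivAt (fun s : ℝ => Real.exp (s / 2)) (Real.exp (t / 2) * (1 / 2)) t := by
    have h0 : HasDerivAt (fun s : ℝ => s / 2) ((1 : ℝ) / 2) t := (hasDerivAt_id t).div_const 2
    exact (Real.hasDerivAt_exp (t / 2)).comp t h0
  have h2 := h1.ofReal_comp
  convert h2 using 1
  push_cast
  ring

private lemma expNegHalf_hasDerivAt (t : ℝ) :
    HasDerivAt (fun s : ℝ => ((Real.exp (-(s / 2)) : ℝ) : ℂ))
      (-(1 / 2 : ℂ) * Real.exp (-(t / 2))) t := by
  have h1 : HasDerivAt (fun s : ℝ => Real.exp (-(s / 2))) (Real.exp (-(t / 2)) * (-(1 / 2))) t := by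
    have h0 : HasDerivAt (fun s : ℝ => -(s / 2)) (-((1 : ℝ) / 2)) t :=
      ((hasDerivAt_id t).div_const 2).neg
    exact (Real.hasDerivAt_exp (-(t / 2))).comp t h0
  have h2 := h1.ofReal_comp
  convert h2 using 1
  push_cast
  ring

private lemma const_of_hasDerivAt_zero {s : Set ℝ} (hc : Convex ℝ s)
    {g : ℝ → ℂ} (hg : ∀ t ∈ s, HasDerivAt g 0 t) {t₀ t : ℝ} (ht₀ : t₀ ∈ s) (ht : t ∈ s) :
    g t = g t₀ := by
  have hz : (ContinuousLinearMap.smulRight (1 : ℝ →L[ℝ] ℝ) (0 : ℂ)) = 0 := by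
    ext u
    simp
  have hbound : ∀ u ∈ s,
      HasFDerivWithinAt g (ContinuousLinearMap.smulRight (1 : ℝ →L[ℝ] ℝ) (0 : ℂ)) s u :=
    fun u hu => ((hg u hu).hasFDerivAt).hasFDerivWithinAt
  have h := hc.norm_image_sub_le_of_norm_hasFDerivWithin_le (C := 0) hbound
    (fun u _ => by simp [hz]) ht ht₀
  have h0 : ‖g t - g t₀‖ ≤ 0 := by
    first
      | simpa using h
      | (rw [norm_sub_rev]; simpa using h)
  have h1 : g t - g t₀ = 0 := by
    have := le_antisymm h0 (norm_nonneg _)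
    rwa [norm_eq_zero] at this
  exact sub_eq_zero.mp h1

private lemma ode_rep {s : Set ℝ} (hc : Convex ℝ s) (hne : s.Nonempty)
    {f f' : ℝ → ℂ}
    (h : ∀ t ∈ s, HasDerivAt f (f' t) t ∧ HasDerivAt f' ((1 / 4 : ℂ) * f t) t) :
    ∃ A B : ℂ, ∀ t ∈ s,
      f t = A * Real.exp (t / 2) + B * Real.exp (-(t / 2)) ∧
      f' t = A / 2 * Real.exp (t / 2) - B / 2 * Real.exp (-(t / 2)) := by
  obtain ⟨t₀, ht₀⟩ := hne
  set g : ℝ → ℂ := fun t => (f' t + f t / 2) * ((Real.exp (-(t / 2)) : ℝ) : ℂ) with hgdef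
  set k : ℝ → ℂ := fun t => (f' t - f t / 2) * ((Real.exp (t / 2) : ℝ) : ℂ) with hkdef
  have hg : ∀ t ∈ s, HasDerivAt g 0 t := by
    intro t ht
    have h1 := ((h t ht).2.add ((h t ht).1.div_const 2)).mul (expNegHalf_hasDerivAt t)
    refine h1.congr_deriv ?_
    simp only [Pi.add_apply]
    ring
  have hk : ∀ t ∈ s, HasDerivAt k 0 t := by
    intro t ht
    have h1 := ((h t ht).2.sub ((h t ht).1.div_const 2)).mul (expHalf_hasDerivAt t)
    refine h1.congr_deriv ?_
    simp only [Pi.sub_apply]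
    ring
  refine ⟨g t₀, -k t₀, fun t ht => ?_⟩
  have e1 : ((Real.exp (-(t / 2)) : ℝ) : ℂ) * ((Real.exp (t / 2) : ℝ) : ℂ) = 1 := by
    rw [← Complex.ofReal_mul, ← Real.exp_add]
    norm_num
  have h1 : f' t + f t / 2 = g t * ((Real.exp (t / 2) : ℝ) : ℂ) := by
    simp only [hgdef]
    rw [mul_assoc, e1, mul_one]
  have h2 : f' t - f t / 2 = k t * ((Real.exp (-(t / 2)) : ℝ) : ℂ) := by
    simp only [hkdef]
    rw [mul_assoc]
    rw [show ((Real.exp (t / 2) : ℝ) : ℂ) * ((Real.exp (-(t / 2)) : ℝ) : ℂ) = 1 by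
      rw [← Complex.ofReal_mul, ← Real.exp_add]; norm_num]
    rw [mul_one]
  rw [const_of_hasDerivAt_zero hc hg ht₀ ht] at h1
  rw [const_of_hasDerivAt_zero hc hk ht₀ ht] at h2
  constructor
  · linear_combination h1 - h2
  · linear_combination (h1 + h2) / 2

end AuxLemmas
set_option maxHeartbeats 1000000 in
/-- a nontrivial bounded solution at a real `λ` is square-integrable together
with its derivative, and the Lagrange-type identity
`λ Σ ω_n |f(x_n)|² + λ² Σ υ_n |f(x_n)|² = (1/4)∫|f|² + ∫|f'|² > 0` holds. -/
theorem stmt_2 (N : ℕ) (hN : 1 ≤ N) (x w v : ℕ → ℝ)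
    (hx : ∀ i j, i < j → j < N → x i < x j)
    (hv : ∀ n, n < N → 0 ≤ v n) (hnd : ∀ n, n < N → 0 < |w n| + v n)
    (lam : ℝ) (f f' : ℝ → ℂ)
    (hsol : IsSol N x w v (lam : ℂ) f f')
    (hbd : ∃ C : ℝ, ∀ t : ℝ, ‖f t‖ ≤ C)
    (hne : ∃ t : ℝ, f t ≠ 0) :
    MemLp f 2 volume ∧ MemLp f' 2 volume ∧
    lam * (∑ n ∈ Finset.range N, w n * ‖f (x n)‖ ^ 2)
        + lam ^ 2 * (∑ n ∈ Finset.range N, v n * ‖f (x n)‖ ^ 2)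
      = (1 / 4) * (∫ t : ℝ, ‖f t‖ ^ 2) + (∫ t : ℝ, ‖f' t‖ ^ 2) ∧
    0 < (1 / 4) * (∫ t : ℝ, ‖f t‖ ^ 2) + (∫ t : ℝ, ‖f' t‖ ^ 2) := by
  classical
  obtain ⟨M, rfl⟩ : ∃ M, N = M + 1 := ⟨N - 1, (Nat.succ_pred_eq_of_pos hN).symm⟩
  obtain ⟨hcont, hode, hjmp⟩ := hsol
  obtain ⟨C, hC⟩ := hbd
  have hC0 : (0 : ℝ) ≤ C := le_trans (norm_nonneg _) (hC 0)
  have hxle : ∀ i j, i ≤ j → j < M + 1 → x i ≤ x j := by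
    intro i j hij hj
    rcases eq_or_lt_of_le hij with rfl | hlt
    · exact le_rfl
    · exact (hx i j hlt hj).le
  have hx0M : x 0 ≤ x M := hxle 0 M (Nat.zero_le _) (by omega)
  -- the open intervals between consecutive interaction points
  set S : ℕ → Set ℝ := fun n =>
    if n = 0 then Set.Iio (x 0)
    else if n < M + 1 then Set.Ioo (x (n - 1)) (x n)
    else Set.Ioi (x M) with hSdef
  have hS0 : S 0 = Set.Iio (x 0) := by simp [hSdef]
  have hSmid : ∀ n, n ≠ 0 → n < M + 1 → S n = Set.Ioo (x (n - 1)) (x n) := by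
    intro n h0 h1; simp [hSdef, h0, h1]; intro h; omega
  have hSlast : S (M + 1) = Set.Ioi (x M) := by simp [hSdef]
  have hSconv : ∀ n, Convex ℝ (S n) := by
    intro n
    simp only [hSdef]
    split_ifs
    · exact convex_Iio _
    · exact convex_Ioo _ _
    · exact convex_Ioi _
  have hSne : ∀ n, (S n).Nonempty := by
    intro n
    simp only [hSdef]
    split_ifs with h1 h2
    · exact Set.nonempty_Iio
    · exact Set.nonempty_Ioo.2 (hx (n - 1) n (by omega) h2)
    · exact Set.nonempty_Ioi
  have hSsol : ∀ n, ∀ t ∈ S n, ∀ m, m < M + 1 → t ≠ x m := by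
    intro n t ht m hm
    by_cases h0 : n = 0
    · subst h0
      rw [hS0] at ht
      exact ne_of_lt (lt_of_lt_of_le ht (hxle 0 m (Nat.zero_le _) hm))
    by_cases h1 : n < M + 1
    · rw [hSmid n h0 h1] at ht
      rcases lt_or_ge m n with h | h
      · exact ne_of_gt (lt_of_le_of_lt (hxle m (n - 1) (by omega) (by omega)) ht.1)
      · exact ne_of_lt (lt_of_lt_of_le ht.2 (hxle n m h hm))
    · have : S n = Set.Ioi (x M) := by simp [hSdef, h0, h1]; intro h; omega
      rw [this] at ht
      exact ne_of_gt (lt_of_le_of_lt (hxle m M (by omega) (by omega)) ht)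
  have hODE : ∀ n, ∀ t ∈ S n,
      HasDerivAt f (f' t) t ∧ HasDerivAt f' ((1 / 4 : ℂ) * f t) t :=
    fun n t ht => hode t (fun m hm => hSsol n t ht m hm)
  choose A B hAB using fun n => ode_rep (hSconv n) (hSne n) (hODE n)
  -- the explicit exponential solutions on each interval
  set F : ℕ → ℝ → ℂ := fun n t =>
    A n * Real.exp (t / 2) + B n * Real.exp (-(t / 2)) with hFdef
  set Fd : ℕ → ℝ → ℂ := fun n t =>
    A n / 2 * Real.exp (t / 2) - B n / 2 * Real.exp (-(t / 2)) with hFddef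
  have hABF : ∀ n, ∀ t ∈ S n, f t = F n t ∧ f' t = Fd n t := by
    intro n t ht
    exact ⟨(hAB n t ht).1, (hAB n t ht).2⟩
  have hFcont : ∀ n, Continuous (F n) := by
    intro n
    simp only [hFdef]
    fun_prop
  have hFdcont : ∀ n, Continuous (Fd n) := by
    intro n
    simp only [hFddef]
    fun_prop
  have hclos : ∀ n, Set.EqOn f (F n) (closure (S n)) :=
    fun n => Set.EqOn.closure (fun t ht => (hABF n t ht).1) hcont (hFcont n)
  -- values at interaction points
  have hfF : ∀ n, n < M + 1 → f (x n) = F n (x n) := by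
    intro n hn
    apply hclos n
    by_cases h0 : n = 0
    · subst h0
      rw [hS0, closure_Iio]
      exact Set.mem_Iic.2 le_rfl
    · rw [hSmid n h0 hn, closure_Ioo (ne_of_lt (hx (n - 1) n (by omega) hn))]
      exact Set.mem_Icc.2 ⟨(hx (n - 1) n (by omega) hn).le, le_rfl⟩
  have hfFl : ∀ n, n < M + 1 → f (x n) = F (n + 1) (x n) := by
    intro n hn
    apply hclos (n + 1)
    by_cases hnM : n < M
    · rw [hSmid (n + 1) (by omega) (by omega), Nat.add_sub_cancel,
        closure_Ioo (ne_of_lt (hx n (n + 1) (by omega) (by omega)))]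
      exact Set.mem_Icc.2 ⟨le_rfl, (hx n (n + 1) (by omega) (by omega)).le⟩
    · have hnM' : n = M := by omega
      subst hnM'
      rw [hSlast, closure_Ioi]
      exact Set.mem_Ici.2 le_rfl
  -- one-sided limits of f' at interaction points
  have hmemL : ∀ n, n < M + 1 → S n ∈ nhdsWithin (x n) (Set.Iio (x n)) := by
    intro n hn
    by_cases h0 : n = 0
    · subst h0
      rw [hS0]
      exact self_mem_nhdsWithin
    · rw [hSmid n h0 hn, ← Set.Ioi_inter_Iio]
      exact Filter.inter_mem
        (mem_nhdsWithin_of_mem_nhds (isOpen_Ioi.mem_nhds (hx (n - 1) n (by omega) hn)))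
        self_mem_nhdsWithin
  have hmemR : ∀ n, n < M + 1 → S (n + 1) ∈ nhdsWithin (x n) (Set.Ioi (x n)) := by
    intro n hn
    by_cases hnM : n < M
    · rw [hSmid (n + 1) (by omega) (by omega), Nat.add_sub_cancel, ← Set.Ioi_inter_Iio]
      exact Filter.inter_mem self_mem_nhdsWithin
        (mem_nhdsWithin_of_mem_nhds (isOpen_Iio.mem_nhds (hx n (n + 1) (by omega) (by omega))))
    · have hnM' : n = M := by omega
      subst hnM'
      rw [hSlast]
      exact self_mem_nhdsWithin
  have hlimL : ∀ n, n < M + 1 →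
      Filter.Tendsto f' (nhdsWithin (x n) (Set.Iio (x n))) (nhds (Fd n (x n))) := by
    intro n hn
    have h1 : Filter.Tendsto (Fd n) (nhdsWithin (x n) (Set.Iio (x n))) (nhds (Fd n (x n))) :=
      ((hFdcont n).tendsto _).mono_left nhdsWithin_le_nhds
    exact Filter.Tendsto.congr'
      (Filter.eventuallyEq_of_mem (hmemL n hn) (fun t ht => ((hABF n t ht).2).symm)) h1
  have hlimR : ∀ n, n < M + 1 →
      Filter.Tendsto f' (nhdsWithin (x n) (Set.Ioi (x n))) (nhds (Fd (n + 1) (x n))) := by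
    intro n hn
    have h1 : Filter.Tendsto (Fd (n + 1)) (nhdsWithin (x n) (Set.Ioi (x n)))
        (nhds (Fd (n + 1) (x n))) :=
      ((hFdcont (n + 1)).tendsto _).mono_left nhdsWithin_le_nhds
    exact Filter.Tendsto.congr'
      (Filter.eventuallyEq_of_mem (hmemR n hn) (fun t ht => ((hABF (n + 1) t ht).2).symm)) h1
  have hjump : ∀ n, n < M + 1 →
      Fd n (x n) - Fd (n + 1) (x n)
        = ((lam : ℂ) * (w n : ℂ) + (lam : ℂ) ^ 2 * (v n : ℂ)) * f (x n) := by
    intro n hn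
    obtain ⟨L, R, hL, hR, hLR⟩ := hjmp n hn
    have e1 : L = Fd n (x n) := tendsto_nhds_unique hL (hlimL n hn)
    have e2 : R = Fd (n + 1) (x n) := tendsto_nhds_unique hR (hlimR n hn)
    rw [e1, e2] at hLR
    linear_combination -hLR
  -- boundedness kills the growing mode on the two unbounded intervals
  have hB0 : B 0 = 0 := by
    by_contra hB
    set K : ℝ := (C + ‖A 0‖ * Real.exp (x 0 / 2) + 1) / ‖B 0‖ with hK
    have hKpos : 0 < K := div_pos (by positivity) (norm_pos_iff.2 hB)
    set t : ℝ := min (x 0 - 1) (-(2 * Real.log K)) with ht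
    have hts : t ∈ S 0 := by
      rw [hS0]
      exact lt_of_le_of_lt (min_le_left (x 0 - 1) (-(2 * Real.log K))) (by linarith)
    have hrep := (hAB 0 t hts).1
    have hnorm : ‖B 0‖ * Real.exp (-(t / 2)) - ‖A 0‖ * Real.exp (t / 2) ≤ ‖f t‖ := by
      rw [hrep]
      have hb : ‖B 0 * ((Real.exp (-(t / 2)) : ℝ) : ℂ)‖ = ‖B 0‖ * Real.exp (-(t / 2)) := by
        rw [norm_mul, Complex.norm_real, Real.norm_eq_abs, abs_of_pos (Real.exp_pos _)]
      have ha : ‖A 0 * ((Real.exp (t / 2) : ℝ) : ℂ)‖ = ‖A 0‖ * Real.exp (t / 2) := by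
        rw [norm_mul, Complex.norm_real, Real.norm_eq_abs, abs_of_pos (Real.exp_pos _)]
      have h3 := norm_sub_le (A 0 * ((Real.exp (t / 2) : ℝ) : ℂ)
        + B 0 * ((Real.exp (-(t / 2)) : ℝ) : ℂ)) (A 0 * ((Real.exp (t / 2) : ℝ) : ℂ))
      simp only [add_sub_cancel_left] at h3
      rw [hb] at h3
      rw [← ha]
      linarith
    have hexp1 : Real.exp (t / 2) ≤ Real.exp (x 0 / 2) := by
      apply Real.exp_le_exp.2
      have := min_le_left (x 0 - 1) (-(2 * Real.log K))
      linarith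
    have hexp2 : K ≤ Real.exp (-(t / 2)) := by
      have h2 : Real.log K ≤ -(t / 2) := by
        have := min_le_right (x 0 - 1) (-(2 * Real.log K))
        linarith
      calc K = Real.exp (Real.log K) := (Real.exp_log hKpos).symm
        _ ≤ _ := Real.exp_le_exp.2 h2
    have hBK : ‖B 0‖ * K = C + ‖A 0‖ * Real.exp (x 0 / 2) + 1 := by
      rw [hK, mul_div_cancel₀ _ (norm_ne_zero_iff.2 hB)]
    have h4 : ‖B 0‖ * K ≤ ‖B 0‖ * Real.exp (-(t / 2)) :=
      mul_le_mul_of_nonneg_left hexp2 (norm_nonneg _)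
    have h5 : ‖A 0‖ * Real.exp (t / 2) ≤ ‖A 0‖ * Real.exp (x 0 / 2) :=
      mul_le_mul_of_nonneg_left hexp1 (norm_nonneg _)
    have h6 := hC t
    linarith
  have hAN : A (M + 1) = 0 := by
    by_contra hA
    set K : ℝ := (C + ‖B (M + 1)‖ * Real.exp (-(x M / 2)) + 1) / ‖A (M + 1)‖ with hK
    have hKpos : 0 < K := div_pos (by positivity) (norm_pos_iff.2 hA)
    set t : ℝ := max (x M + 1) (2 * Real.log K) with ht
    have hts : t ∈ S (M + 1) := by
      rw [hSlast]
      exact lt_of_lt_of_le (show x M < x M + 1 by linarith) (le_max_left (x M + 1) (2 * Real.log K))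
    have hrep := (hAB (M + 1) t hts).1
    have hnorm : ‖A (M + 1)‖ * Real.exp (t / 2) - ‖B (M + 1)‖ * Real.exp (-(t / 2)) ≤ ‖f t‖ := by
      rw [hrep]
      have ha : ‖A (M + 1) * ((Real.exp (t / 2) : ℝ) : ℂ)‖
          = ‖A (M + 1)‖ * Real.exp (t / 2) := by
        rw [norm_mul, Complex.norm_real, Real.norm_eq_abs, abs_of_pos (Real.exp_pos _)]
      have hb : ‖B (M + 1) * ((Real.exp (-(t / 2)) : ℝ) : ℂ)‖
          = ‖B (M + 1)‖ * Real.exp (-(t / 2)) := by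
        rw [norm_mul, Complex.norm_real, Real.norm_eq_abs, abs_of_pos (Real.exp_pos _)]
      have h3 := norm_sub_le (A (M + 1) * ((Real.exp (t / 2) : ℝ) : ℂ)
        + B (M + 1) * ((Real.exp (-(t / 2)) : ℝ) : ℂ)) (B (M + 1) * ((Real.exp (-(t / 2)) : ℝ) : ℂ))
      simp only [add_sub_cancel_right] at h3
      rw [ha] at h3
      rw [← hb]
      linarith
    have hexp1 : Real.exp (-(t / 2)) ≤ Real.exp (-(x M / 2)) := by
      apply Real.exp_le_exp.2
      have := le_max_left (x M + 1) (2 * Real.log K)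
      linarith
    have hexp2 : K ≤ Real.exp (t / 2) := by
      have h2 : Real.log K ≤ t / 2 := by
        have := le_max_right (x M + 1) (2 * Real.log K)
        linarith
      calc K = Real.exp (Real.log K) := (Real.exp_log hKpos).symm
        _ ≤ _ := Real.exp_le_exp.2 h2
    have hAK : ‖A (M + 1)‖ * K = C + ‖B (M + 1)‖ * Real.exp (-(x M / 2)) + 1 := by
      rw [hK, mul_div_cancel₀ _ (norm_ne_zero_iff.2 hA)]
    have h4 : ‖A (M + 1)‖ * K ≤ ‖A (M + 1)‖ * Real.exp (t / 2) :=
      mul_le_mul_of_nonneg_left hexp2 (norm_nonneg _)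
    have h5 : ‖B (M + 1)‖ * Real.exp (-(t / 2)) ≤ ‖B (M + 1)‖ * Real.exp (-(x M / 2)) :=
      mul_le_mul_of_nonneg_left hexp1 (norm_nonneg _)
    have h6 := hC t
    linarith
  -- basic computational facts
  have hmc : ∀ z : ℂ, z * star z = ((‖z‖ ^ 2 : ℝ) : ℂ) := by
    intro z
    rw [show star z = (starRingEnd ℂ) z from rfl, Complex.mul_conj]
    norm_cast
    rw [Complex.normSq_eq_norm_sq]
  -- derivatives of the explicit solutions
  have hFder : ∀ n t, HasDerivAt (F n) (Fd n t) t := by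
    intro n t
    have h1 := (HasDerivAt.const_mul (A n) (expHalf_hasDerivAt t)).add
      (HasDerivAt.const_mul (B n) (expNegHalf_hasDerivAt t))
    simp only [hFdef, hFddef]
    refine h1.congr_deriv ?_
    ring
  have hFdder : ∀ n t, HasDerivAt (Fd n) ((1 / 4 : ℂ) * F n t) t := by
    intro n t
    have h1 := (HasDerivAt.const_mul (A n / 2) (expHalf_hasDerivAt t)).sub
      (HasDerivAt.const_mul (B n / 2) (expNegHalf_hasDerivAt t))
    simp only [hFdef, hFddef]
    refine h1.congr_deriv ?_
    ring
  set Gr : ℕ → ℝ → ℝ := fun n t => 1 / 4 * ‖F n t‖ ^ 2 + ‖Fd n t‖ ^ 2 with hGrdef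
  set gr : ℝ → ℝ := fun t => 1 / 4 * ‖f t‖ ^ 2 + ‖f' t‖ ^ 2 with hgrdef
  have hGrcont : ∀ n, Continuous (Gr n) := by
    intro n
    simp only [hGrdef]
    exact (continuous_const.mul ((hFcont n).norm.pow 2)).add ((hFdcont n).norm.pow 2)
  have hgrS : ∀ n, ∀ t ∈ S n, gr t = Gr n t := by
    intro n t ht
    simp only [hgrdef, hGrdef]
    rw [(hABF n t ht).1, (hABF n t ht).2]
  have hΦ : ∀ n t, HasDerivAt (fun s => Fd n s * star (F n s)) ((Gr n t : ℝ) : ℂ) t := by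
    intro n t
    have h1 := (hFdder n t).mul ((hFder n t).star)
    refine h1.congr_deriv ?_
    simp only [hGrdef]
    rw [show ((1 / 4 * ‖F n t‖ ^ 2 + ‖Fd n t‖ ^ 2 : ℝ) : ℂ)
        = (1 / 4 : ℂ) * ((‖F n t‖ ^ 2 : ℝ) : ℂ) + ((‖Fd n t‖ ^ 2 : ℝ) : ℂ) by push_cast; ring]
    rw [← hmc (F n t), ← hmc (Fd n t)]
    ring
  -- fundamental theorem of calculus on compact intervals
  have hFTC : ∀ n (a b : ℝ),
      ((∫ t in a..b, Gr n t : ℝ) : ℂ)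
        = Fd n b * star (F n b) - Fd n a * star (F n a) := by
    intro n a b
    have h1 : ∫ t in a..b, ((Gr n t : ℝ) : ℂ)
        = Fd n b * star (F n b) - Fd n a * star (F n a) :=
      intervalIntegral.integral_eq_sub_of_hasDerivAt (fun t _ => hΦ n t)
        ((Complex.continuous_ofReal.comp (hGrcont n)).intervalIntegrable _ _)
    rw [intervalIntegral.integral_ofReal] at h1
    exact h1
  have h_ae_ne : ∀ c : ℝ, ∀ᵐ t : ℝ, t ≠ c := by
    intro c
    rw [ae_iff]
    have : {t : ℝ | ¬ t ≠ c} = {c} := by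
      ext u
      simp [not_not]
    rw [this]
    exact Real.volume_singleton
  -- the combined integrand agrees a.e. with the explicit one on each finite interval
  have hgr_ii : ∀ k, k < M → IntervalIntegrable gr volume (x k) (x (k + 1)) := by
    intro k hk
    rw [intervalIntegrable_iff_integrableOn_Ioc_of_le (hxle k (k + 1) (by omega) (by omega))]
    have hbase : IntegrableOn (Gr (k + 1)) (Set.Ioc (x k) (x (k + 1))) volume :=
      (hGrcont (k + 1)).integrableOn_Ioc
    apply hbase.congr_fun_ae
    filter_upwards [ae_restrict_mem measurableSet_Ioc,
      ae_restrict_of_ae (h_ae_ne (x (k + 1)))] with t hmem hne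
    exact (hgrS (k + 1) t (by
      rw [hSmid (k + 1) (by omega) (by omega), Nat.add_sub_cancel]
      exact ⟨hmem.1, lt_of_le_of_ne hmem.2 hne⟩)).symm
  have hmidcongr : ∀ k, k < M →
      (∫ t in Set.Ioc (x k) (x (k + 1)), gr t)
        = ∫ t in Set.Ioc (x k) (x (k + 1)), Gr (k + 1) t := by
    intro k hk
    apply setIntegral_congr_ae measurableSet_Ioc
    filter_upwards [h_ae_ne (x (k + 1))] with t hne hmem
    exact hgrS (k + 1) t (by
      rw [hSmid (k + 1) (by omega) (by omega), Nat.add_sub_cancel]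
      exact ⟨hmem.1, lt_of_le_of_ne hmem.2 hne⟩)
  -- integrability on the left ray
  have hgr0 : ∀ t ∈ S 0, gr t = ‖A 0‖ ^ 2 / 2 * Real.exp t := by
    intro t ht
    rw [hgrS 0 t ht]
    simp only [hGrdef, hFdef, hFddef, hB0]
    rw [show A 0 * ((Real.exp (t / 2) : ℝ) : ℂ) + 0 * ((Real.exp (-(t / 2)) : ℝ) : ℂ)
        = A 0 * ((Real.exp (t / 2) : ℝ) : ℂ) by ring,
      show A 0 / 2 * ((Real.exp (t / 2) : ℝ) : ℂ) - 0 / 2 * ((Real.exp (-(t / 2)) : ℝ) : ℂ)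
        = A 0 / 2 * ((Real.exp (t / 2) : ℝ) : ℂ) by ring]
    rw [norm_mul, norm_mul, Complex.norm_real, Real.norm_eq_abs, abs_of_pos (Real.exp_pos _)]
    rw [show ‖A 0 / 2‖ = ‖A 0‖ / 2 by rw [norm_div]; norm_num]
    rw [mul_pow, mul_pow, show (Real.exp (t / 2)) ^ 2 = Real.exp t by
      rw [sq, ← Real.exp_add, add_halves]]
    ring
  have hgrN : ∀ t ∈ S (M + 1), gr t = ‖B (M + 1)‖ ^ 2 / 2 * Real.exp (-t) := by
    intro t ht
    rw [hgrS (M + 1) t ht]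
    simp only [hGrdef, hFdef, hFddef, hAN]
    rw [show (0 : ℂ) * ((Real.exp (t / 2) : ℝ) : ℂ) + B (M + 1) * ((Real.exp (-(t / 2)) : ℝ) : ℂ)
        = B (M + 1) * ((Real.exp (-(t / 2)) : ℝ) : ℂ) by ring,
      show (0 : ℂ) / 2 * ((Real.exp (t / 2) : ℝ) : ℂ)
          - B (M + 1) / 2 * ((Real.exp (-(t / 2)) : ℝ) : ℂ)
        = -(B (M + 1) / 2) * ((Real.exp (-(t / 2)) : ℝ) : ℂ) by ring]
    rw [norm_mul, norm_mul, Complex.norm_real, Real.norm_eq_abs, abs_of_pos (Real.exp_pos _)]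
    rw [show ‖-(B (M + 1) / 2)‖ = ‖B (M + 1)‖ / 2 by rw [norm_neg, norm_div]; norm_num]
    rw [mul_pow, mul_pow, show (Real.exp (-(t / 2))) ^ 2 = Real.exp (-t) by
      rw [sq, ← Real.exp_add]; ring_nf]
    ring
  have hgrIic : IntegrableOn gr (Set.Iic (x 0)) volume := by
    have hbase : IntegrableOn (fun t => ‖A 0‖ ^ 2 / 2 * Real.exp t) (Set.Iic (x 0)) volume :=
      (integrableOn_exp_Iic (x 0)).const_mul _
    apply hbase.congr_fun_ae
    filter_upwards [ae_restrict_mem measurableSet_Iic,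
      ae_restrict_of_ae (h_ae_ne (x 0))] with t hmem hne
    exact (hgr0 t (by rw [hS0]; exact lt_of_le_of_ne hmem hne)).symm
  have hexpneg : IntegrableOn (fun t : ℝ => Real.exp (-t)) (Set.Ioi (x M)) volume := by
    have := exp_neg_integrableOn_Ioi (x M) (one_pos (α := ℝ))
    simpa using this
  have hgrIoi : IntegrableOn gr (Set.Ioi (x M)) volume := by
    have hbase : IntegrableOn (fun t => ‖B (M + 1)‖ ^ 2 / 2 * Real.exp (-t))
        (Set.Ioi (x M)) volume := hexpneg.const_mul _
    apply hbase.congr_fun (fun t ht => (hgrN t (by rwa [hSlast])).symm) measurableSet_Ioi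
  have hgrIoc : IntegrableOn gr (Set.Ioc (x 0) (x M)) volume := by
    rw [← intervalIntegrable_iff_integrableOn_Ioc_of_le hx0M]
    exact IntervalIntegrable.trans_iterate (fun k hk => hgr_ii k hk)
  have hgrIoi0 : IntegrableOn gr (Set.Ioi (x 0)) volume := by
    rw [← Set.Ioc_union_Ioi_eq_Ioi hx0M]
    exact hgrIoc.union hgrIoi
  have hgrInt : Integrable gr volume := by
    have h1 := hgrIic.union hgrIoi0
    rwa [Set.Iic_union_Ioi, integrableOn_univ] at h1
  -- measurability of f'
  have hf'm : AEStronglyMeasurable f' volume := by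
    have hd : ∀ᵐ t : ℝ, f' t = deriv f t := by
      rw [ae_iff]
      have hz : volume (x '' {n : ℕ | n < M + 1}) = 0 :=
        Set.Finite.measure_zero ((Set.finite_Iio (M + 1)).image x) volume
      refine measure_mono_null ?_ hz
      intro t ht
      simp only [Set.mem_setOf_eq] at ht
      by_contra hmem
      apply ht
      have hnx : ∀ m, m < M + 1 → t ≠ x m := by
        intro m hm he
        exact hmem ⟨m, hm, he.symm⟩
      exact ((hode t hnx).1.deriv).symm
    exact ((measurable_deriv f).aestronglyMeasurable).congr (hd.mono fun t ht => ht.symm)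
  -- integrability of the two squared functions
  have hg1meas : AEStronglyMeasurable (fun t => ‖f t‖ ^ 2) volume :=
    ((hcont.norm.pow 2)).aestronglyMeasurable
  have hg2meas : AEStronglyMeasurable (fun t => ‖f' t‖ ^ 2) volume :=
    Continuous.comp_aestronglyMeasurable (continuous_pow 2) hf'm.norm
  have hg1int : Integrable (fun t => ‖f t‖ ^ 2) volume := by
    apply Integrable.mono' (hgrInt.const_mul 4) hg1meas
    filter_upwards with t
    rw [Real.norm_eq_abs, abs_of_nonneg (by positivity)]
    simp only [hgrdef]
    have : (0 : ℝ) ≤ ‖f' t‖ ^ 2 := by positivity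
    linarith
  have hg2int : Integrable (fun t => ‖f' t‖ ^ 2) volume := by
    apply Integrable.mono' hgrInt hg2meas
    filter_upwards with t
    rw [Real.norm_eq_abs, abs_of_nonneg (by positivity)]
    simp only [hgrdef]
    have : (0 : ℝ) ≤ ‖f t‖ ^ 2 := by positivity
    linarith
  -- computation of the three pieces of the integral
  have hleft : (∫ t in Set.Iic (x 0), gr t) = ‖A 0‖ ^ 2 / 2 * Real.exp (x 0) := by
    have h1 : (∫ t in Set.Iic (x 0), gr t)
        = ∫ t in Set.Iic (x 0), ‖A 0‖ ^ 2 / 2 * Real.exp t := by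
      apply setIntegral_congr_ae measurableSet_Iic
      filter_upwards [h_ae_ne (x 0)] with t hne hmem
      exact hgr0 t (by rw [hS0]; exact lt_of_le_of_ne hmem hne)
    rw [h1, integral_const_mul, integral_exp_Iic]
  have hright : (∫ t in Set.Ioi (x M), gr t) = ‖B (M + 1)‖ ^ 2 / 2 * Real.exp (-(x M)) := by
    have h1 : (∫ t in Set.Ioi (x M), gr t)
        = ∫ t in Set.Ioi (x M), ‖B (M + 1)‖ ^ 2 / 2 * Real.exp (-t) := by
      apply setIntegral_congr_ae measurableSet_Ioi
      filter_upwards with t hmem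
      exact hgrN t (by rwa [hSlast])
    rw [h1, integral_const_mul, integral_exp_neg_Ioi]
  -- boundary values of the explicit pieces as complex numbers
  have hleftC : ((∫ t in Set.Iic (x 0), gr t : ℝ) : ℂ) = Fd 0 (x 0) * star (F 0 (x 0)) := by
    rw [hleft]
    have hFd0 : Fd 0 (x 0) = (1 / 2 : ℂ) * F 0 (x 0) := by
      simp only [hFdef, hFddef, hB0]
      ring
    have hNF : ‖F 0 (x 0)‖ ^ 2 = ‖A 0‖ ^ 2 * Real.exp (x 0) := by
      simp only [hFdef, hB0]
      rw [show A 0 * ((Real.exp (x 0 / 2) : ℝ) : ℂ) + 0 * ((Real.exp (-(x 0 / 2)) : ℝ) : ℂ)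
          = A 0 * ((Real.exp (x 0 / 2) : ℝ) : ℂ) by ring]
      rw [norm_mul, Complex.norm_real, Real.norm_eq_abs, abs_of_pos (Real.exp_pos _), mul_pow,
        show (Real.exp (x 0 / 2)) ^ 2 = Real.exp (x 0) by rw [sq, ← Real.exp_add, add_halves]]
    rw [hFd0, mul_assoc, hmc (F 0 (x 0)), hNF]
    push_cast
    ring
  have hrightC : ((∫ t in Set.Ioi (x M), gr t : ℝ) : ℂ)
      = -(Fd (M + 1) (x M) * star (F (M + 1) (x M))) := by
    rw [hright]
    have hFdN : Fd (M + 1) (x M) = -(1 / 2 : ℂ) * F (M + 1) (x M) := by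
      simp only [hFdef, hFddef, hAN]
      ring
    have hNF : ‖F (M + 1) (x M)‖ ^ 2 = ‖B (M + 1)‖ ^ 2 * Real.exp (-(x M)) := by
      simp only [hFdef, hAN]
      rw [show (0 : ℂ) * ((Real.exp (x M / 2) : ℝ) : ℂ)
          + B (M + 1) * ((Real.exp (-(x M / 2)) : ℝ) : ℂ)
          = B (M + 1) * ((Real.exp (-(x M / 2)) : ℝ) : ℂ) by ring]
      rw [norm_mul, Complex.norm_real, Real.norm_eq_abs, abs_of_pos (Real.exp_pos _), mul_pow,
        show (Real.exp (-(x M / 2))) ^ 2 = Real.exp (-(x M)) by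
          rw [sq, ← Real.exp_add]; ring_nf]
    rw [hFdN,
      show -(1 / 2 : ℂ) * F (M + 1) (x M) * star (F (M + 1) (x M))
        = -(1 / 2 : ℂ) * (F (M + 1) (x M) * star (F (M + 1) (x M))) from mul_assoc _ _ _,
      hmc (F (M + 1) (x M)), hNF]
    push_cast
    ring
  have hmidC : ((∫ t in Set.Ioc (x 0) (x M), gr t : ℝ) : ℂ)
      = ∑ k ∈ Finset.range M, (Fd (k + 1) (x (k + 1)) * star (F (k + 1) (x (k + 1)))
          - Fd (k + 1) (x k) * star (F (k + 1) (x k))) := by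
    rw [← intervalIntegral.integral_of_le hx0M,
      ← intervalIntegral.sum_integral_adjacent_intervals (fun k hk => hgr_ii k hk)]
    push_cast
    apply Finset.sum_congr rfl
    intro k hk
    have hk' : k < M := Finset.mem_range.1 hk
    have hle : x k ≤ x (k + 1) := hxle k (k + 1) (by omega) (by omega)
    rw [intervalIntegral.integral_of_le hle, hmidcongr k hk',
      ← intervalIntegral.integral_of_le hle]
    exact hFTC (k + 1) (x k) (x (k + 1))
  -- assembling the full integral
  have hsplit : (∫ t, gr t) = (∫ t in Set.Iic (x 0), gr t)
      + ((∫ t in Set.Ioc (x 0) (x M), gr t) + (∫ t in Set.Ioi (x M), gr t)) := by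
    have h2 : (∫ t in Set.Ioi (x 0), gr t)
        = (∫ t in Set.Ioc (x 0) (x M), gr t) + ∫ t in Set.Ioi (x M), gr t := by
      rw [← setIntegral_union (Set.Ioc_disjoint_Ioi le_rfl) measurableSet_Ioi hgrIoc hgrIoi,
        Set.Ioc_union_Ioi_eq_Ioi hx0M]
    rw [← h2, ← intervalIntegral.integral_Iic_add_Ioi hgrIic hgrIoi0]
  have hC1 : ((∫ t, gr t : ℝ) : ℂ)
      = ∑ n ∈ Finset.range (M + 1),
          (Fd n (x n) * star (F n (x n)) - Fd (n + 1) (x n) * star (F (n + 1) (x n))) := by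
    rw [hsplit]
    push_cast
    have e1 : ∑ n ∈ Finset.range (M + 1),
        (Fd n (x n) * star (F n (x n)) - Fd (n + 1) (x n) * star (F (n + 1) (x n)))
        = (∑ n ∈ Finset.range (M + 1), Fd n (x n) * star (F n (x n)))
          - ∑ n ∈ Finset.range (M + 1), Fd (n + 1) (x n) * star (F (n + 1) (x n)) :=
      Finset.sum_sub_distrib _ _
    have e2 : ∑ n ∈ Finset.range (M + 1), Fd n (x n) * star (F n (x n))
        = (∑ k ∈ Finset.range M, Fd (k + 1) (x (k + 1)) * star (F (k + 1) (x (k + 1))))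
          + Fd 0 (x 0) * star (F 0 (x 0)) :=
      Finset.sum_range_succ' (fun n => Fd n (x n) * star (F n (x n))) M
    have e3 : ∑ n ∈ Finset.range (M + 1), Fd (n + 1) (x n) * star (F (n + 1) (x n))
        = (∑ k ∈ Finset.range M, Fd (k + 1) (x k) * star (F (k + 1) (x k)))
          + Fd (M + 1) (x M) * star (F (M + 1) (x M)) :=
      Finset.sum_range_succ (fun n => Fd (n + 1) (x n) * star (F (n + 1) (x n))) M
    have e4 : ∑ k ∈ Finset.range M,
        (Fd (k + 1) (x (k + 1)) * star (F (k + 1) (x (k + 1)))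
          - Fd (k + 1) (x k) * star (F (k + 1) (x k)))
        = (∑ k ∈ Finset.range M, Fd (k + 1) (x (k + 1)) * star (F (k + 1) (x (k + 1))))
          - ∑ k ∈ Finset.range M, Fd (k + 1) (x k) * star (F (k + 1) (x k)) :=
      Finset.sum_sub_distrib _ _
    rw [hleftC, hrightC, hmidC, e4, e1, e2, e3]
    ring
  have hterm : ∀ n ∈ Finset.range (M + 1),
      Fd n (x n) * star (F n (x n)) - Fd (n + 1) (x n) * star (F (n + 1) (x n))
        = (((lam * w n + lam ^ 2 * v n) * ‖f (x n)‖ ^ 2 : ℝ) : ℂ) := by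
    intro n hn
    have hn' : n < M + 1 := Finset.mem_range.1 hn
    rw [← hfF n hn', ← hfFl n hn', ← sub_mul, hjump n hn', mul_assoc, hmc (f (x n))]
    push_cast
    ring
  have hreal : (∫ t, gr t)
      = ∑ n ∈ Finset.range (M + 1), (lam * w n + lam ^ 2 * v n) * ‖f (x n)‖ ^ 2 := by
    have h1 := hC1.trans (Finset.sum_congr rfl hterm)
    exact_mod_cast h1
  have hgr_split : (∫ t, gr t)
      = 1 / 4 * (∫ t : ℝ, ‖f t‖ ^ 2) + (∫ t : ℝ, ‖f' t‖ ^ 2) := by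
    simp only [hgrdef]
    rw [integral_add (hg1int.const_mul _) hg2int, integral_const_mul]
  have hsum_split : ∑ n ∈ Finset.range (M + 1), (lam * w n + lam ^ 2 * v n) * ‖f (x n)‖ ^ 2
      = lam * (∑ n ∈ Finset.range (M + 1), w n * ‖f (x n)‖ ^ 2)
        + lam ^ 2 * (∑ n ∈ Finset.range (M + 1), v n * ‖f (x n)‖ ^ 2) := by
    rw [Finset.mul_sum, Finset.mul_sum, ← Finset.sum_add_distrib]
    apply Finset.sum_congr rfl
    intro n _
    ring
  have hident : lam * (∑ n ∈ Finset.range (M + 1), w n * ‖f (x n)‖ ^ 2)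
      + lam ^ 2 * (∑ n ∈ Finset.range (M + 1), v n * ‖f (x n)‖ ^ 2)
      = (1 / 4) * (∫ t : ℝ, ‖f t‖ ^ 2) + (∫ t : ℝ, ‖f' t‖ ^ 2) := by
    rw [← hsum_split, ← hreal, hgr_split]
  -- positivity
  have hpos1 : 0 < ∫ t : ℝ, ‖f t‖ ^ 2 := by
    rw [integral_pos_iff_support_of_nonneg (fun t => by positivity) hg1int]
    obtain ⟨t₀, ht₀⟩ := hne
    have hopen : IsOpen {t : ℝ | f t ≠ 0} := (isOpen_compl_singleton).preimage hcont
    have hsub : {t : ℝ | f t ≠ 0} ⊆ Function.support (fun t => ‖f t‖ ^ 2) := by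
      intro t ht
      exact Function.mem_support.2 (pow_ne_zero 2 (norm_ne_zero_iff.2 ht))
    calc (0 : ENNReal) < volume {t : ℝ | f t ≠ 0} := hopen.measure_pos volume ⟨t₀, ht₀⟩
      _ ≤ volume (Function.support (fun t => ‖f t‖ ^ 2)) := measure_mono hsub
  have hpos2 : 0 ≤ ∫ t : ℝ, ‖f' t‖ ^ 2 := integral_nonneg (fun t => by positivity)
  refine ⟨(memLp_two_iff_integrable_sq_norm hcont.aestronglyMeasurable).2 hg1int,
    (memLp_two_iff_integrable_sq_norm hf'm).2 hg2int, hident, by linarith⟩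
end

section
/- Let λ ∈ ℝ and let f be a bounded solution at λ of the generalized spectral problem that is not identically zero. Then λ · ( Σ_n ω_n |f(x_n)|² + 2λ · Σ_n υ_n |f(x_n)|² ) > 0; in particular the norming constant Σ_n ω_n |f(x_n)|² + 2λ Σ_n υ_n |f(x_n)|² is nonzero and has the same sign as λ. -/
open scoped BigOperators

section Helpers
open Complex Set Filter


lemma key_exp {c : ℂ} {F : ℝ → ℂ} {s t : ℝ}
    (hd : ∀ u ∈ Set.uIcc s t, HasDerivAt F (c * F u) u) :
    F t = F s * Complex.exp (c * ((t : ℂ) - s)) := by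
  set G : ℝ → ℂ := fun u => F u * Complex.exp (-(c * u)) with hG
  have hdG : ∀ u ∈ Set.uIcc s t, HasDerivAt G 0 u := by
    intro u hu
    have h1 : HasDerivAt (fun u : ℝ => Complex.exp (-(c * u))) (-c * Complex.exp (-(c * u))) u := by
      have : HasDerivAt (fun u : ℝ => -(c * (u:ℂ))) (-c) u := by
        exact (((Complex.ofRealCLM.hasDerivAt (x := u)).const_mul c).neg).congr_deriv (by simp)
      simpa [mul_comm] using this.cexp
    have := (hd u hu).mul h1
    exact this.congr_deriv (by ring)
  have key : G t = G s := by
    rcases le_total s t with h | h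
    · have := constant_of_has_deriv_right_zero (a := s) (b := t)
        (fun u hu => ((hdG u (by rwa [Set.uIcc_of_le h])).continuousAt.continuousWithinAt))
        (fun u hu => ((hdG u (by rw [Set.uIcc_of_le h]; exact Ico_subset_Icc_self hu)).hasDerivWithinAt))
      exact this t (by simp [h])
    · have := constant_of_has_deriv_right_zero (a := t) (b := s)
        (fun u hu => ((hdG u (by rwa [Set.uIcc_of_ge h])).continuousAt.continuousWithinAt))
        (fun u hu => ((hdG u (by rw [Set.uIcc_of_ge h]; exact Ico_subset_Icc_self hu)).hasDerivWithinAt))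
      exact (this s (by simp [h])).symm
  have h1 : F t = G t * Complex.exp (c * t) := by
    simp [hG, mul_assoc, ← Complex.exp_add]
  rw [h1, key, hG]
  simp only [mul_assoc, ← Complex.exp_add]
  ring_nf

lemma hk_exp {f f' : ℝ → ℂ} {S : Set ℝ}
    (hS : ∀ u ∈ S, HasDerivAt f (f' u) u ∧ HasDerivAt f' ((1/4) * f u) u)
    {s t : ℝ} (hsub : Set.uIcc s t ⊆ S) :
    f' t - f t / 2 = (f' s - f s / 2) * Complex.exp (-(1/2) * ((t:ℂ) - s)) ∧
    f' t + f t / 2 = (f' s + f s / 2) * Complex.exp ((1/2) * ((t:ℂ) - s)) := by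
  constructor
  · exact key_exp (F := fun u => f' u - f u / 2) (c := -(1/2)) (fun u hu => by
      have h := hS u (hsub hu)
      exact (h.2.sub (h.1.div_const 2)).congr_deriv (by ring))
  · exact key_exp (F := fun u => f' u + f u / 2) (c := (1/2)) (fun u hu => by
      have h := hS u (hsub hu)
      exact (h.2.add (h.1.div_const 2)).congr_deriv (by ring))

lemma norm_cexp_real (r : ℝ) : ‖Complex.exp ((r : ℂ))‖ = Real.exp r := by
  rw [Complex.norm_exp]; simp

lemma right_tail_k {f f' : ℝ → ℂ} {a : ℝ} {C : ℝ}
    (hS : ∀ u ∈ Ioi a, HasDerivAt f (f' u) u ∧ HasDerivAt f' ((1/4) * f u) u)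
    (hbd : ∀ t, ‖f t‖ ≤ C) {s : ℝ} (hs : a < s) : f' s + f s / 2 = 0 := by
  by_contra hk
  set K := f' s + f s / 2 with hK
  set H := f' s - f s / 2 with hH
  have hC : 0 ≤ C := le_trans (norm_nonneg _) (hbd s)
  set M : ℝ := (C + ‖H‖) / ‖K‖ with hM
  have hM0 : 0 ≤ M := div_nonneg (by positivity) (norm_nonneg _)
  set t : ℝ := s + 2 * Real.log (M + 1) with ht
  have hts : s ≤ t := by
    have : 0 ≤ Real.log (M + 1) := Real.log_nonneg (by linarith)
    simp only [ht]; linarith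
  have hsub : Set.uIcc s t ⊆ Ioi a := by
    rw [Set.uIcc_of_le hts]
    intro u hu; exact lt_of_lt_of_le hs hu.1
  obtain ⟨hhr, hkr⟩ := hk_exp hS hsub
  -- f t = K * exp((t-s)/2) - H * exp(-(t-s)/2)
  have hft : f t = K * Complex.exp ((1/2) * ((t:ℂ) - s)) - H * Complex.exp (-(1/2) * ((t:ℂ) - s)) := by
    rw [← hkr, ← hhr]; ring
  have he1 : ‖Complex.exp ((1/2 : ℂ) * ((t:ℂ) - s))‖ = Real.exp ((t - s)/2) := by
    have : ((1/2 : ℂ)) * ((t:ℂ) - s) = (((t - s)/2 : ℝ) : ℂ) := by push_cast; ring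
    rw [this, norm_cexp_real]
  have he2 : ‖Complex.exp (-(1/2 : ℂ) * ((t:ℂ) - s))‖ = Real.exp (-((t - s)/2)) := by
    have : (-(1/2 : ℂ)) * ((t:ℂ) - s) = ((-((t - s)/2) : ℝ) : ℂ) := by push_cast; ring
    rw [this, norm_cexp_real]
  have hexp : Real.exp ((t - s)/2) = M + 1 := by
    have : (t - s)/2 = Real.log (M + 1) := by rw [ht]; ring
    rw [this, Real.exp_log (by linarith)]
  have hlow : ‖K‖ * (M + 1) - ‖H‖ ≤ ‖f t‖ := by
    calc ‖K‖ * (M + 1) - ‖H‖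
        ≤ ‖K * Complex.exp ((1/2 : ℂ) * ((t:ℂ) - s))‖ - ‖H * Complex.exp (-(1/2 : ℂ) * ((t:ℂ) - s))‖ := by
          rw [norm_mul, norm_mul, he1, he2, hexp]
          have : Real.exp (-((t - s)/2)) ≤ 1 := Real.exp_le_one_iff.2 (by linarith)
          nlinarith [norm_nonneg H]
      _ ≤ ‖f t‖ := by
          rw [hft]
          have h1 := norm_sub_norm_le (K * Complex.exp ((1/2 : ℂ) * ((t:ℂ) - s))) (H * Complex.exp (-(1/2 : ℂ) * ((t:ℂ) - s)))
          linarith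
  have hKM : ‖K‖ * M = C + ‖H‖ := by
    rw [hM, mul_comm, div_mul_cancel₀ _ (norm_ne_zero_iff.2 hk)]
  have : C < ‖f t‖ := by
    have hKpos : 0 < ‖K‖ := norm_pos_iff.2 hk
    nlinarith
  exact absurd (hbd t) (not_le.2 this)

lemma left_tail_h {f f' : ℝ → ℂ} {a : ℝ} {C : ℝ}
    (hS : ∀ u ∈ Iio a, HasDerivAt f (f' u) u ∧ HasDerivAt f' ((1/4) * f u) u)
    (hbd : ∀ t, ‖f t‖ ≤ C) {s : ℝ} (hs : s < a) : f' s - f s / 2 = 0 := by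
  by_contra hh
  set K := f' s + f s / 2 with hK
  set H := f' s - f s / 2 with hH
  have hC : 0 ≤ C := le_trans (norm_nonneg _) (hbd s)
  set M : ℝ := (C + ‖K‖) / ‖H‖ with hM
  have hM0 : 0 ≤ M := div_nonneg (by positivity) (norm_nonneg _)
  set t : ℝ := s - 2 * Real.log (M + 1) with ht
  have hts : t ≤ s := by
    have : 0 ≤ Real.log (M + 1) := Real.log_nonneg (by linarith)
    simp only [ht]; linarith
  have hsub : Set.uIcc s t ⊆ Iio a := by
    rw [Set.uIcc_of_ge hts]
    intro u hu; exact lt_of_le_of_lt hu.2 hs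
  obtain ⟨hhr, hkr⟩ := hk_exp hS hsub
  have hft : f t = K * Complex.exp ((1/2) * ((t:ℂ) - s)) - H * Complex.exp (-(1/2) * ((t:ℂ) - s)) := by
    rw [← hkr, ← hhr]; ring
  have he1 : ‖Complex.exp ((1/2 : ℂ) * ((t:ℂ) - s))‖ = Real.exp ((t - s)/2) := by
    have : ((1/2 : ℂ)) * ((t:ℂ) - s) = (((t - s)/2 : ℝ) : ℂ) := by push_cast; ring
    rw [this, norm_cexp_real]
  have he2 : ‖Complex.exp (-(1/2 : ℂ) * ((t:ℂ) - s))‖ = Real.exp (-((t - s)/2)) := by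
    have : (-(1/2 : ℂ)) * ((t:ℂ) - s) = ((-((t - s)/2) : ℝ) : ℂ) := by push_cast; ring
    rw [this, norm_cexp_real]
  have hexp : Real.exp (-((t - s)/2)) = M + 1 := by
    have : -((t - s)/2) = Real.log (M + 1) := by rw [ht]; ring
    rw [this, Real.exp_log (by linarith)]
  have hlow : ‖H‖ * (M + 1) - ‖K‖ ≤ ‖f t‖ := by
    calc ‖H‖ * (M + 1) - ‖K‖
        ≤ ‖H * Complex.exp (-(1/2 : ℂ) * ((t:ℂ) - s))‖ - ‖K * Complex.exp ((1/2 : ℂ) * ((t:ℂ) - s))‖ := by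
          rw [norm_mul, norm_mul, he1, he2, hexp]
          have : Real.exp ((t - s)/2) ≤ 1 := Real.exp_le_one_iff.2 (by linarith)
          nlinarith [norm_nonneg K]
      _ ≤ ‖f t‖ := by
          rw [hft]
          have h1 := norm_sub_norm_le (H * Complex.exp (-(1/2 : ℂ) * ((t:ℂ) - s))) (K * Complex.exp ((1/2 : ℂ) * ((t:ℂ) - s)))
          have h2 : ‖H * Complex.exp (-(1/2 : ℂ) * ((t:ℂ) - s)) - K * Complex.exp ((1/2 : ℂ) * ((t:ℂ) - s))‖
              = ‖K * Complex.exp ((1/2 : ℂ) * ((t:ℂ) - s)) - H * Complex.exp (-(1/2 : ℂ) * ((t:ℂ) - s))‖ := norm_sub_rev _ _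
          linarith
  have hKM : ‖H‖ * M = C + ‖K‖ := by
    rw [hM, mul_comm, div_mul_cancel₀ _ (norm_ne_zero_iff.2 hh)]
  have : C < ‖f t‖ := by
    have hHpos : 0 < ‖H‖ := norm_pos_iff.2 hh
    nlinarith
  exact absurd (hbd t) (not_le.2 this)

lemma cexp_cont (t : ℝ) (c : ℂ) : Continuous (fun s : ℝ => Complex.exp (c * ((t:ℂ) - s))) :=
  Complex.continuous_exp.comp (continuous_const.mul (continuous_const.sub Complex.continuous_ofReal))

lemma right_tail {f f' : ℝ → ℂ} {a : ℝ} {C : ℝ}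
    (hc : Continuous f)
    (hS : ∀ u ∈ Ioi a, HasDerivAt f (f' u) u ∧ HasDerivAt f' ((1/4) * f u) u)
    (hbd : ∀ t, ‖f t‖ ≤ C) :
    (∀ t, a < t → f t = f a * Complex.exp (-(1/2) * ((t:ℂ) - a))) ∧
    Tendsto f' (nhdsWithin a (Set.Ioi a)) (nhds (-(f a)/2)) := by
  have hfd : ∀ s, a < s → f' s = -(f s)/2 := by
    intro s hs
    have h := right_tail_k hS hbd hs
    linear_combination h
  constructor
  · intro t ht
    have hid : ∀ s, a < s → f t = f s * Complex.exp (-(1/2) * ((t:ℂ) - s)) := by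
      intro s hs
      have hsub : Set.uIcc s t ⊆ Ioi a := fun u hu =>
        lt_of_lt_of_le (lt_min hs ht) hu.1
      have h := (hk_exp hS hsub).1
      rw [hfd t ht, hfd s hs] at h
      linear_combination -h
    have h1 : Tendsto (fun s : ℝ => f s * Complex.exp (-(1/2) * ((t:ℂ) - s)))
        (nhdsWithin a (Set.Ioi a)) (nhds (f a * Complex.exp (-(1/2) * ((t:ℂ) - a)))) :=
      (((hc.tendsto a).mul ((cexp_cont t (-(1/2))).tendsto a))).mono_left nhdsWithin_le_nhds
    have h2 : Tendsto (fun s : ℝ => f s * Complex.exp (-(1/2) * ((t:ℂ) - s)))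
        (nhdsWithin a (Set.Ioi a)) (nhds (f t)) := by
      apply Tendsto.congr' _ tendsto_const_nhds
      filter_upwards [self_mem_nhdsWithin] with s hs
      exact hid s hs
    exact tendsto_nhds_unique h2 h1
  · have heq : f' =ᶠ[nhdsWithin a (Set.Ioi a)] fun s => -(f s)/2 := by
      filter_upwards [self_mem_nhdsWithin] with s hs
      exact hfd s hs
    exact Tendsto.congr' heq.symm
      ((((hc.tendsto a).neg.div_const 2)).mono_left nhdsWithin_le_nhds)

lemma left_tail {f f' : ℝ → ℂ} {a : ℝ} {C : ℝ}
    (hc : Continuous f)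
    (hS : ∀ u ∈ Iio a, HasDerivAt f (f' u) u ∧ HasDerivAt f' ((1/4) * f u) u)
    (hbd : ∀ t, ‖f t‖ ≤ C) :
    (∀ t, t < a → f t = f a * Complex.exp ((1/2) * ((t:ℂ) - a))) ∧
    Tendsto f' (nhdsWithin a (Set.Iio a)) (nhds ((f a)/2)) := by
  have hfd : ∀ s, s < a → f' s = (f s)/2 := by
    intro s hs
    have h := left_tail_h hS hbd hs
    linear_combination h
  constructor
  · intro t ht
    have hid : ∀ s, s < a → f t = f s * Complex.exp ((1/2) * ((t:ℂ) - s)) := by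
      intro s hs
      have hsub : Set.uIcc s t ⊆ Iio a := fun u hu =>
        lt_of_le_of_lt hu.2 (max_lt hs ht)
      have h := (hk_exp hS hsub).2
      rw [hfd t ht, hfd s hs] at h
      linear_combination h
    have h1 : Tendsto (fun s : ℝ => f s * Complex.exp ((1/2) * ((t:ℂ) - s)))
        (nhdsWithin a (Set.Iio a)) (nhds (f a * Complex.exp ((1/2) * ((t:ℂ) - a)))) :=
      (((hc.tendsto a).mul ((cexp_cont t (1/2)).tendsto a))).mono_left nhdsWithin_le_nhds
    have h2 : Tendsto (fun s : ℝ => f s * Complex.exp ((1/2) * ((t:ℂ) - s)))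
        (nhdsWithin a (Set.Iio a)) (nhds (f t)) := by
      apply Tendsto.congr' _ tendsto_const_nhds
      filter_upwards [self_mem_nhdsWithin] with s hs
      exact hid s hs
    exact tendsto_nhds_unique h2 h1
  · have heq : f' =ᶠ[nhdsWithin a (Set.Iio a)] fun s => (f s)/2 := by
      filter_upwards [self_mem_nhdsWithin] with s hs
      exact hfd s hs
    exact Tendsto.congr' heq.symm
      (((hc.tendsto a).div_const 2).mono_left nhdsWithin_le_nhds)

lemma conj_deriv {f f' : ℝ → ℂ} {u : ℝ} (h : HasDerivAt f (f' u) u) :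
    HasDerivAt (fun t => (starRingEnd ℂ) (f t)) ((starRingEnd ℂ) (f' u)) u := by
  exact (Complex.conjCLE.hasFDerivAt.comp_hasDerivAt u h)

lemma g_deriv {f f' : ℝ → ℂ} {u : ℝ}
    (h1 : HasDerivAt f (f' u) u) (h2 : HasDerivAt f' ((1/4) * f u) u) :
    HasDerivAt (fun t => (f' t * (starRingEnd ℂ) (f t)).re)
      (Complex.normSq (f' u) + (1/4) * Complex.normSq (f u)) u := by
  have hm : HasDerivAt (fun t => f' t * (starRingEnd ℂ) (f t))
      ((1/4) * f u * (starRingEnd ℂ) (f u) + f' u * (starRingEnd ℂ) (f' u)) u :=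
    h2.mul (conj_deriv h1)
  have := Complex.reCLM.hasFDerivAt.comp_hasDerivAt u hm
  have h4 : (1/4 : ℂ) * f u * (starRingEnd ℂ) (f u) + f' u * (starRingEnd ℂ) (f' u)
      = ((Complex.normSq (f' u) + (1/4) * Complex.normSq (f u) : ℝ) : ℂ) := by
    rw [mul_assoc, Complex.mul_conj, Complex.mul_conj]; push_cast; ring
  exact this.congr_deriv (by rw [h4]; simp)

lemma g_mono {f f' : ℝ → ℂ} {a b : ℝ} (hab : a < b)
    (hc : Continuous f)
    (hS : ∀ u ∈ Ioo a b, HasDerivAt f (f' u) u ∧ HasDerivAt f' ((1/4) * f u) u)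
    {Ra Lb : ℂ}
    (hRa : Tendsto f' (nhdsWithin a (Set.Ioi a)) (nhds Ra))
    (hLb : Tendsto f' (nhdsWithin b (Set.Iio b)) (nhds Lb)) :
    (Ra * (starRingEnd ℂ) (f a)).re ≤ (Lb * (starRingEnd ℂ) (f b)).re := by
  set g : ℝ → ℝ := fun t => (f' t * (starRingEnd ℂ) (f t)).re with hg
  have hgd : ∀ u ∈ Ioo a b, HasDerivAt g (Complex.normSq (f' u) + (1/4) * Complex.normSq (f u)) u :=
    fun u hu => g_deriv (hS u hu).1 (hS u hu).2
  have hmono : MonotoneOn g (Ioo a b) := by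
    apply monotoneOn_of_deriv_nonneg (convex_Ioo a b)
    · exact fun u hu => ((hgd u hu).continuousAt.continuousWithinAt)
    · rw [interior_Ioo]; exact fun u hu => (hgd u hu).differentiableAt.differentiableWithinAt
    · rw [interior_Ioo]; intro u hu
      rw [(hgd u hu).deriv]
      exact add_nonneg (Complex.normSq_nonneg _) (mul_nonneg (by norm_num) (Complex.normSq_nonneg _))
  set t₀ : ℝ := (a + b) / 2 with ht₀
  have ht₀m : t₀ ∈ Ioo a b := ⟨by simp only [ht₀]; linarith, by simp only [ht₀]; linarith⟩
  have hga : Tendsto g (nhdsWithin a (Set.Ioi a)) (nhds ((Ra * (starRingEnd ℂ) (f a)).re)) := by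
    apply (Complex.continuous_re.tendsto _).comp
    exact hRa.mul (((Complex.continuous_conj.comp hc).tendsto a).mono_left nhdsWithin_le_nhds)
  have hgb : Tendsto g (nhdsWithin b (Set.Iio b)) (nhds ((Lb * (starRingEnd ℂ) (f b)).re)) := by
    apply (Complex.continuous_re.tendsto _).comp
    exact hLb.mul (((Complex.continuous_conj.comp hc).tendsto b).mono_left nhdsWithin_le_nhds)
  have h1 : (Ra * (starRingEnd ℂ) (f a)).re ≤ g t₀ := by
    apply le_of_tendsto hga
    filter_upwards [Ioo_mem_nhdsGT_of_mem ⟨le_refl a, ht₀m.1⟩] with s hs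
    exact hmono ⟨hs.1, lt_trans hs.2 ht₀m.2⟩ ht₀m (le_of_lt hs.2)
  have h2 : g t₀ ≤ (Lb * (starRingEnd ℂ) (f b)).re := by
    apply ge_of_tendsto hgb
    filter_upwards [Ioo_mem_nhdsLT_of_mem ⟨ht₀m.2, le_refl b⟩] with s hs
    exact hmono ht₀m ⟨lt_trans ht₀m.1 hs.1, hs.2⟩ (le_of_lt hs.1)
  linarith

lemma zero_prop {f f' : ℝ → ℂ} {a b : ℝ} (hab : a < b) (hc : Continuous f)
    (hS : ∀ u ∈ Ioo a b, HasDerivAt f (f' u) u ∧ HasDerivAt f' ((1/4) * f u) u)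
    {R : ℂ} (hR : Tendsto f' (nhdsWithin a (Set.Ioi a)) (nhds R))
    (hfa : f a = 0) (hR0 : R = 0) :
    (∀ t, a < t → t ≤ b → f t = 0) ∧ (∀ t ∈ Ioo a b, f' t = 0) := by
  have hIoo_mem : Ioo a b ∈ nhdsWithin a (Set.Ioi a) := Ioo_mem_nhdsGT_of_mem ⟨le_rfl, hab⟩
  have key : ∀ t ∈ Ioo a b, f' t - f t / 2 = 0 ∧ f' t + f t / 2 = 0 := by
    intro t ht
    have hid : ∀ s ∈ Ioo a b,
        (f' t - f t / 2 = (f' s - f s / 2) * Complex.exp (-(1/2) * ((t:ℂ) - s))) ∧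
        (f' t + f t / 2 = (f' s + f s / 2) * Complex.exp ((1/2) * ((t:ℂ) - s))) := by
      intro s hs
      exact hk_exp hS (Set.ordConnected_Ioo.uIcc_subset hs ht)
    have hfa' : Tendsto f (nhdsWithin a (Set.Ioi a)) (nhds 0) := by
      rw [← hfa]; exact (hc.tendsto a).mono_left nhdsWithin_le_nhds
    constructor
    · have h1 : Tendsto (fun s : ℝ => (f' s - f s / 2) * Complex.exp (-(1/2) * ((t:ℂ) - s)))
          (nhdsWithin a (Set.Ioi a)) (nhds ((R - 0/2) * Complex.exp (-(1/2) * ((t:ℂ) - a)))) :=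
        (hR.sub (hfa'.div_const 2)).mul
          (((cexp_cont t (-(1/2))).tendsto a).mono_left nhdsWithin_le_nhds)
      rw [hR0] at h1
      simp only [zero_div, sub_zero, zero_mul] at h1
      have h2 : Tendsto (fun s : ℝ => (f' s - f s / 2) * Complex.exp (-(1/2) * ((t:ℂ) - s)))
          (nhdsWithin a (Set.Ioi a)) (nhds (f' t - f t / 2)) := by
        apply Tendsto.congr' _ tendsto_const_nhds
        filter_upwards [hIoo_mem] with s hs
        exact (hid s hs).1
      exact tendsto_nhds_unique h2 h1
    · have h1 : Tendsto (fun s : ℝ => (f' s + f s / 2) * Complex.exp ((1/2) * ((t:ℂ) - s)))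
          (nhdsWithin a (Set.Ioi a)) (nhds ((R + 0/2) * Complex.exp ((1/2) * ((t:ℂ) - a)))) :=
        (hR.add (hfa'.div_const 2)).mul
          (((cexp_cont t (1/2)).tendsto a).mono_left nhdsWithin_le_nhds)
      rw [hR0] at h1
      simp only [zero_div, add_zero, zero_mul] at h1
      have h2 : Tendsto (fun s : ℝ => (f' s + f s / 2) * Complex.exp ((1/2) * ((t:ℂ) - s)))
          (nhdsWithin a (Set.Ioi a)) (nhds (f' t + f t / 2)) := by
        apply Tendsto.congr' _ tendsto_const_nhds
        filter_upwards [hIoo_mem] with s hs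
        exact (hid s hs).2
      exact tendsto_nhds_unique h2 h1
  have hf0 : ∀ t ∈ Ioo a b, f t = 0 := by
    intro t ht
    linear_combination (key t ht).2 - (key t ht).1
  have hfb : f b = 0 := by
    have h1 : Tendsto f (nhdsWithin b (Set.Iio b)) (nhds (f b)) :=
      (hc.tendsto b).mono_left nhdsWithin_le_nhds
    have h2 : Tendsto f (nhdsWithin b (Set.Iio b)) (nhds 0) := by
      apply Tendsto.congr' _ tendsto_const_nhds
      filter_upwards [Ioo_mem_nhdsLT_of_mem ⟨hab, le_rfl⟩] with s hs
      exact (hf0 s hs).symm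
    exact tendsto_nhds_unique h1 h2
  refine ⟨fun t hat htb => ?_, fun t ht => ?_⟩
  · rcases lt_or_eq_of_le htb with h | h
    · exact hf0 t ⟨hat, h⟩
    · rw [h]; exact hfb
  · linear_combination ((key t ht).1 + (key t ht).2) / 2

theorem stmt_3' (N : ℕ) (hN : 1 ≤ N) (x w v : ℕ → ℝ)
    (hx : ∀ i j, i < j → j < N → x i < x j)
    (hv : ∀ n, n < N → 0 ≤ v n) (hnd : ∀ n, n < N → 0 < |w n| + v n)
    (lam : ℝ) (f f' : ℝ → ℂ)
    (hc : Continuous f)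
    (hode : ∀ t : ℝ, (∀ n < N, t ≠ x n) →
      HasDerivAt f (f' t) t ∧ HasDerivAt f' ((1 / 4) * f t) t)
    (hjump : ∀ n < N, ∃ L R : ℂ,
      Filter.Tendsto f' (nhdsWithin (x n) (Set.Iio (x n))) (nhds L) ∧
      Filter.Tendsto f' (nhdsWithin (x n) (Set.Ioi (x n))) (nhds R) ∧
      R - L = -((lam:ℂ) * (w n : ℂ) + (lam:ℂ) ^ 2 * (v n : ℂ)) * f (x n))
    (hbd : ∃ C : ℝ, ∀ t : ℝ, ‖f t‖ ≤ C)
    (hne : ∃ t : ℝ, f t ≠ 0) :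
    0 < lam * ((∑ n ∈ Finset.range N, w n * ‖f (x n)‖ ^ 2)
        + 2 * lam * ∑ n ∈ Finset.range N, v n * ‖f (x n)‖ ^ 2) := by
  obtain ⟨C, hbd⟩ := hbd
  choose! Lv Rv hLt hRt hJ using hjump
  obtain ⟨M, rfl⟩ : ∃ M, N = M + 1 := ⟨N - 1, (Nat.succ_pred_eq_of_pos hN).symm⟩
  have hmonox : ∀ i j, i ≤ j → j < M + 1 → x i ≤ x j := by
    intro i j hij hj
    rcases lt_or_eq_of_le hij with h | h
    · exact le_of_lt (hx i j h hj)
    · rw [h]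
  have hSoi : ∀ u ∈ Ioi (x M), HasDerivAt f (f' u) u ∧ HasDerivAt f' ((1/4) * f u) u := by
    intro u hu
    exact hode u (fun n hn => ne_of_gt (lt_of_le_of_lt
      (hmonox n M (Nat.lt_succ_iff.1 hn) (Nat.lt_succ_self M)) hu))
  have hSio : ∀ u ∈ Iio (x 0), HasDerivAt f (f' u) u ∧ HasDerivAt f' ((1/4) * f u) u := by
    intro u hu
    exact hode u (fun n hn => ne_of_lt (lt_of_lt_of_le hu
      (hmonox 0 n (Nat.zero_le n) hn)))
  have hSmid : ∀ m, m + 1 < M + 1 → ∀ u ∈ Ioo (x m) (x (m+1)),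
      HasDerivAt f (f' u) u ∧ HasDerivAt f' ((1/4) * f u) u := by
    intro m hm u hu
    apply hode u
    intro n hn
    rcases le_or_gt n m with h | h
    · exact ne_of_gt (lt_of_le_of_lt (hmonox n m h (lt_trans (Nat.lt_succ_self m) hm)) hu.1)
    · exact ne_of_lt (lt_of_lt_of_le hu.2 (hmonox (m+1) n h hn))
  obtain ⟨hrf, hRlim⟩ := right_tail hc hSoi hbd
  obtain ⟨hlf, hLlim⟩ := left_tail hc hSio hbd
  have hRM : Rv M = -(f (x M))/2 := tendsto_nhds_unique (hRt M (Nat.lt_succ_self M)) hRlim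
  have hL0 : Lv 0 = f (x 0)/2 := tendsto_nhds_unique (hLt 0 (Nat.succ_pos M)) hLlim
  have hfx0 : f (x 0) ≠ 0 := by
    intro h0
    have main : ∀ n, n < M + 1 → (∀ t, t ≤ x n → f t = 0) ∧ Rv n = 0 := by
      intro n
      induction n with
      | zero =>
        intro _
        have hz : ∀ t, t ≤ x 0 → f t = 0 := by
          intro t ht
          rcases lt_or_eq_of_le ht with h | h
          · rw [hlf t h, h0, zero_mul]
          · rw [h]; exact h0
        refine ⟨hz, ?_⟩
        have hj := hJ 0 (Nat.succ_pos M)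
        rw [hL0, h0] at hj
        simpa using hj
      | succ m ih =>
        intro hm1
        obtain ⟨hz, hR⟩ := ih (lt_trans (Nat.lt_succ_self m) hm1)
        have hlt : x m < x (m+1) := hx m (m+1) (Nat.lt_succ_self m) hm1
        obtain ⟨hz2, hf'0⟩ := zero_prop hlt hc (hSmid m hm1)
          (hRt m (lt_trans (Nat.lt_succ_self m) hm1)) (hz _ le_rfl) hR
        have hznew : ∀ t, t ≤ x (m+1) → f t = 0 := by
          intro t ht
          rcases le_or_gt t (x m) with h | h
          · exact hz t h
          · exact hz2 t h ht
        refine ⟨hznew, ?_⟩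
        have hLm1 : Lv (m+1) = 0 := by
          have h2 : Filter.Tendsto f' (nhdsWithin (x (m+1)) (Set.Iio (x (m+1)))) (nhds 0) := by
            apply Filter.Tendsto.congr' _ tendsto_const_nhds
            filter_upwards [Ioo_mem_nhdsLT_of_mem ⟨hlt, le_rfl⟩] with s hs
            exact (hf'0 s hs).symm
          exact tendsto_nhds_unique (hLt (m+1) hm1) h2
        have hj := hJ (m+1) hm1
        rw [hLm1, hznew (x (m+1)) le_rfl] at hj
        simpa using hj
    obtain ⟨t, htne⟩ := hne
    apply htne
    rcases le_or_gt t (x M) with h | h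
    · exact (main M (Nat.lt_succ_self M)).1 t h
    · rw [hrf t h, (main M (Nat.lt_succ_self M)).1 (x M) le_rfl, zero_mul]
  set G : ℕ → ℝ := fun n => (Lv n * (starRingEnd ℂ) (f (x n))).re with hGdef
  set H : ℕ → ℝ := fun n => (Rv n * (starRingEnd ℂ) (f (x n))).re with hHdef
  have hjumpGH : ∀ n, n < M + 1 → G n - H n = (lam * w n + lam^2 * v n) * ‖f (x n)‖^2 := by
    intro n hn
    have key : Rv n * (starRingEnd ℂ) (f (x n)) - Lv n * (starRingEnd ℂ) (f (x n))
        = ((-(lam * w n + lam^2 * v n) * ‖f (x n)‖^2 : ℝ) : ℂ) := by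
      rw [← sub_mul, hJ n hn, mul_assoc, Complex.mul_conj]
      rw [Complex.normSq_eq_norm_sq]
      push_cast
      ring
    have hre := congrArg Complex.re key
    simp only [Complex.sub_re, Complex.ofReal_re] at hre
    simp only [hGdef, hHdef]
    linarith [hre]
  have hmonoGH : ∀ n, n + 1 < M + 1 → H n ≤ G (n+1) := by
    intro n hn
    exact g_mono (hx n (n+1) (Nat.lt_succ_self n) hn) hc (hSmid n hn)
      (hRt n (lt_trans (Nat.lt_succ_self n) hn)) (hLt (n+1) hn)
  have hG0 : G 0 = ‖f (x 0)‖^2 / 2 := by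
    simp only [hGdef]
    rw [hL0, div_mul_eq_mul_div, Complex.mul_conj]
    rw [Complex.normSq_eq_norm_sq]
    have : ((‖f (x 0)‖^2 : ℝ) : ℂ) / 2 = ((‖f (x 0)‖^2 / 2 : ℝ) : ℂ) := by push_cast; ring
    rw [this, Complex.ofReal_re]
  have hHM : H M = -(‖f (x M)‖^2 / 2) := by
    simp only [hHdef]
    rw [hRM]
    have : -(f (x M))/2 * (starRingEnd ℂ) (f (x M)) = ((-(‖f (x M)‖^2 / 2) : ℝ) : ℂ) := by
      rw [div_mul_eq_mul_div, neg_mul, Complex.mul_conj]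
      rw [Complex.normSq_eq_norm_sq]
      push_cast
      ring
    rw [this, Complex.ofReal_re]
  have hsum : ∑ n ∈ Finset.range (M+1), (lam * w n + lam^2 * v n) * ‖f (x n)‖^2
      = (G 0 - H M) + ∑ n ∈ Finset.range M, (G (n+1) - H n) := by
    have h1 : ∑ n ∈ Finset.range (M+1), (lam * w n + lam^2 * v n) * ‖f (x n)‖^2
        = ∑ n ∈ Finset.range (M+1), (G n - H n) :=
      Finset.sum_congr rfl fun n hn => (hjumpGH n (Finset.mem_range.1 hn)).symm
    rw [h1, Finset.sum_sub_distrib, Finset.sum_range_succ', Finset.sum_range_succ,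
      Finset.sum_sub_distrib]
    ring
  have hpos : 0 < ∑ n ∈ Finset.range (M+1), (lam * w n + lam^2 * v n) * ‖f (x n)‖^2 := by
    rw [hsum, hG0, hHM]
    have h1 : 0 ≤ ∑ n ∈ Finset.range M, (G (n+1) - H n) :=
      Finset.sum_nonneg fun n hn => sub_nonneg.2 (hmonoGH n (Nat.succ_lt_succ (Finset.mem_range.1 hn)))
    have h2 : 0 < ‖f (x 0)‖^2 := pow_pos (norm_pos_iff.2 hfx0) 2
    have h3 : 0 ≤ ‖f (x M)‖^2 := by positivity
    linarith
  have hexp : ∑ n ∈ Finset.range (M+1), (lam * w n + lam^2 * v n) * ‖f (x n)‖^2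
      = lam * ∑ n ∈ Finset.range (M+1), w n * ‖f (x n)‖^2
        + lam^2 * ∑ n ∈ Finset.range (M+1), v n * ‖f (x n)‖^2 := by
    rw [Finset.mul_sum, Finset.mul_sum, ← Finset.sum_add_distrib]
    exact Finset.sum_congr rfl fun n _ => by ring
  have hvs : 0 ≤ ∑ n ∈ Finset.range (M+1), v n * ‖f (x n)‖^2 :=
    Finset.sum_nonneg fun n hn => mul_nonneg (hv n (Finset.mem_range.1 hn)) (by positivity)
  have hfinal : lam * ((∑ n ∈ Finset.range (M+1), w n * ‖f (x n)‖^2)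
        + 2 * lam * ∑ n ∈ Finset.range (M+1), v n * ‖f (x n)‖^2)
      = (∑ n ∈ Finset.range (M+1), (lam * w n + lam^2 * v n) * ‖f (x n)‖^2)
        + lam^2 * ∑ n ∈ Finset.range (M+1), v n * ‖f (x n)‖^2 := by
    rw [hexp]; ring
  rw [hfinal]
  have h4 : 0 ≤ lam^2 * ∑ n ∈ Finset.range (M+1), v n * ‖f (x n)‖^2 :=
    mul_nonneg (sq_nonneg lam) hvs
  linarith

end Helpers

/-- for a nontrivial bounded solution at a real `λ`, the norming constant
`Σ ω_n |f(x_n)|² + 2 λ Σ υ_n |f(x_n)|²` is nonzero and has the same sign as `λ`. -/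
theorem stmt_3 (N : ℕ) (hN : 1 ≤ N) (x w v : ℕ → ℝ)
    (hx : ∀ i j, i < j → j < N → x i < x j)
    (hv : ∀ n, n < N → 0 ≤ v n) (hnd : ∀ n, n < N → 0 < |w n| + v n)
    (lam : ℝ) (f f' : ℝ → ℂ)
    (hsol : IsSol N x w v (lam : ℂ) f f')
    (hbd : ∃ C : ℝ, ∀ t : ℝ, ‖f t‖ ≤ C)
    (hne : ∃ t : ℝ, f t ≠ 0) :
    0 < lam * ((∑ n ∈ Finset.range N, w n * ‖f (x n)‖ ^ 2)
        + 2 * lam * ∑ n ∈ Finset.range N, v n * ‖f (x n)‖ ^ 2) := by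
  obtain ⟨hc, hode, hjump⟩ := hsol
  exact stmt_3' N hN x w v hx hv hnd lam f f' hc hode hjump hbd hne
end
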